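/- arXiv:1201.4375 — 7 statements merged into one kernel-verified Lean document; each statement's English description precedes it below -/
import Mathlib

section
/- For every integer ℓ ≥ 1, SP(2ℓ+1, 2) = C(2ℓ, ℓ-1); that is, the maximum number of partitions in a Sperner 2-partition system on a (2ℓ+1)-element set is the binomial coefficient (2ℓ choose ℓ-1). -/
open Finset

/-- `P` is a partition of the finite set `X` into exactly `k` nonempty classes. -/
def IsPartitionInto {α : Type*} [DecidableEq α] (X : Finset α) (k : ℕ)
    (P : Finset (Finset α)) : Prop :=
  P.card = k ∧ (∀ A ∈ P, A.Nonempty) ∧ (∀ A ∈ P, A ⊆ X) ∧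
    ∀ x ∈ X, ∃! A, A ∈ P ∧ x ∈ A

/-- `Sys` is a Sperner `k`-partition system on the finite set `X`: every member is a
`k`-partition of `X` and no class of one partition is contained in a class of a
different partition of the system. -/
def IsSpernerPartitionSystem {α : Type*} [DecidableEq α] (X : Finset α) (k : ℕ)
    (Sys : Finset (Finset (Finset α))) : Prop :=
  (∀ P ∈ Sys, IsPartitionInto X k P) ∧
    ∀ P ∈ Sys, ∀ Q ∈ Sys, P ≠ Q → ∀ A ∈ P, ∀ B ∈ Q, ¬ A ⊆ B

/-- `SP n k` is the maximum number of partitions in a Sperner `k`-partition system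
on an `n`-element set. -/
noncomputable def SP (n k : ℕ) : ℕ :=
  sSup {m | ∃ Sys : Finset (Finset (Finset (Fin n))),
    IsSpernerPartitionSystem Finset.univ k Sys ∧ Sys.card = m}

open FinsetFamily

theorem card_le_card_upShadow {n a : ℕ} (F : Finset (Finset (Fin n)))
    (hF : (F : Set (Finset (Fin n))).Sized a) (ha : 2 * a < n) : #F ≤ #(∂⁺ F) := by
  have hB : ((Fᶜˢ : Finset (Finset (Fin n))) : Set (Finset (Fin n))).Sized (n - a) := by
    intro A hA
    rw [mem_coe, mem_compls] at hA
    have h1 : #(Aᶜ) = a := hF hA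
    have h2 : #(Aᶜ) = Fintype.card (Fin n) - #A := card_compl A
    have h3 : #A ≤ Fintype.card (Fin n) := by
      simpa using card_le_card A.subset_univ
    simp only [Fintype.card_fin] at h2 h3
    omega
  have key := card_mul_le_card_shadow_mul hB
  have hup : ∂⁺ F = (∂ (Fᶜˢ))ᶜˢ := by
    conv_lhs => rw [← compls_compls F]
    rw [upShadow_compls]
  have h4 : Fintype.card (Fin n) - (n - a) + 1 = a + 1 := by
    simp only [Fintype.card_fin]; omega
  rw [h4] at key
  have h5 : #Fᶜˢ = #F := card_compls _
  rw [hup, card_compls]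
  have h6 : a + 1 ≤ n - a := by omega
  have : #F * (n - a) ≤ #(∂ Fᶜˢ) * (n - a) :=
    le_trans (by rw [← h5]; exact key) (Nat.mul_le_mul_left _ h6)
  exact Nat.le_of_mul_le_mul_right this (by omega)

theorem bollobas (ℓ : ℕ) (hℓ : 1 ≤ ℓ) (j : ℕ) :
    ∀ F : Finset (Finset (Fin (2 * ℓ + 1))),
      (F : Set (Finset (Fin (2 * ℓ + 1)))).Intersecting →
      IsAntichain (· ⊆ ·) (F : Set (Finset (Fin (2 * ℓ + 1)))) →
      (∀ A ∈ F, ℓ - j ≤ #A ∧ #A ≤ ℓ) → #F ≤ (2 * ℓ).choose (ℓ - 1) := by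
  induction j with
  | zero =>
    intro F hint hanti hsize
    have hsized : (F : Set (Finset (Fin (2 * ℓ + 1)))).Sized ℓ := by
      intro A hA
      have := hsize A hA
      omega
    have := Finset.erdos_ko_rado hint hsized (by omega : ℓ ≤ (2 * ℓ + 1) / 2)
    simpa using this
  | succ j ih =>
    intro F hint hanti hsize
    by_cases hjl : ℓ ≤ j
    · exact ih F hint hanti fun A hA => ⟨by omega, (hsize A hA).2⟩
    push_neg at hjl
    set a := ℓ - j - 1 with ha_def
    have haj : a + 1 = ℓ - j := by omega
    set F₀ := F.filter (fun A => #A = a) with hF₀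
    set F₁ := F.filter (fun A => ¬ #A = a) with hF₁
    have hF₀sized : (F₀ : Set (Finset (Fin (2 * ℓ + 1)))).Sized a := by
      intro A hA
      rw [mem_coe, hF₀, mem_filter] at hA
      exact hA.2
    -- every member of the upshadow has card a+1 and contains a member of F₀
    have hup : ∀ B ∈ ∂⁺ F₀, #B = a + 1 ∧ ∃ A, A ∈ F ∧ #A = a ∧ A ⊆ B := by
      intro B hB
      have hBcard : #B = a + 1 := hF₀sized.upShadow hB
      obtain ⟨A, hA, hAB⟩ := exists_subset_of_mem_upShadow hB
      rw [hF₀, mem_filter] at hA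
      exact ⟨hBcard, A, hA.1, hA.2, hAB⟩
    -- the upshadow is disjoint from F
    have hdisj : Disjoint (∂⁺ F₀) F := by
      rw [disjoint_left]
      intro B hB hBF
      obtain ⟨hBc, A, hA, hAc, hAB⟩ := hup B hB
      exact hanti (mem_coe.2 hA) (mem_coe.2 hBF) (fun h => by rw [h] at hAc; omega) hAB
    set F' := F₁ ∪ ∂⁺ F₀ with hF'
    have hdisj1 : Disjoint F₁ (∂⁺ F₀) :=
      (hdisj.mono_right (filter_subset _ _)).symm
    have hcard' : #F ≤ #F' := by
      rw [hF', card_union_of_disjoint hdisj1]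
      have h1 : #F₀ ≤ #(∂⁺ F₀) :=
        card_le_card_upShadow F₀ hF₀sized (by omega)
      have h2 : #F₁ + #F₀ = #F := by
        rw [hF₁, hF₀, add_comm]
        exact card_filter_add_card_filter_not _
      omega
    -- each member of F' contains a member of F
    have hwit : ∀ B ∈ F', ∃ A ∈ F, A ⊆ B := by
      intro B hB
      rw [hF', mem_union] at hB
      rcases hB with hB | hB
      · exact ⟨B, (mem_filter.1 hB).1, Subset.rfl⟩
      · obtain ⟨_, A, hA, _, hAB⟩ := hup B hB
        exact ⟨A, hA, hAB⟩
    have hint' : (F' : Set (Finset (Fin (2 * ℓ + 1)))).Intersecting := by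
      intro B hB C hC
      obtain ⟨A, hA, hAB⟩ := hwit B (mem_coe.1 hB)
      obtain ⟨A', hA', hAC⟩ := hwit C (mem_coe.1 hC)
      intro hBC
      exact hint (mem_coe.2 hA) (mem_coe.2 hA')
        (hBC.mono hAB hAC)
    -- cards in F₁ are ≥ a+1
    have hF₁card : ∀ B ∈ F₁, a + 1 ≤ #B ∧ #B ≤ ℓ := by
      intro B hB
      rw [hF₁, mem_filter] at hB
      have := hsize B hB.1
      have := hB.2
      omega
    have hanti' : IsAntichain (· ⊆ ·) (F' : Set (Finset (Fin (2 * ℓ + 1)))) := by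
      intro B hB C hC hne hBC
      rw [mem_coe, hF', mem_union] at hB hC
      rcases hB with hB | hB <;> rcases hC with hC | hC
      · exact hanti (mem_coe.2 (mem_of_mem_filter B hB))
          (mem_coe.2 (mem_of_mem_filter C hC)) hne hBC
      · -- B ∈ F₁, C ∈ upshadow: #C = a+1 ≤ #B, so B = C
        have h1 := (hup C hC).1
        have h2 := (hF₁card B hB).1
        exact hne (eq_of_subset_of_card_le hBC (by omega))
      · -- B ∈ upshadow, C ∈ F₁: A ⊆ B ⊆ C with A, C ∈ F, A ≠ C
        obtain ⟨hBcard, A, hA, hAc, hAB⟩ := hup B hB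
        have hCF : C ∈ F := mem_of_mem_filter C hC
        have hAC : A ≠ C := by
          intro h
          have := (hF₁card C hC).1
          rw [h] at hAc
          omega
        exact hanti (mem_coe.2 hA) (mem_coe.2 hCF) hAC (hAB.trans hBC)
      · have h1 := (hup B hB).1
        have h2 := (hup C hC).1
        exact hne (eq_of_subset_of_card_le hBC (by omega))
    have hsize' : ∀ B ∈ F', ℓ - j ≤ #B ∧ #B ≤ ℓ := by
      intro B hB
      rw [hF', mem_union] at hB
      rcases hB with hB | hB
      · have := hF₁card B hB; omega
      · have := (hup B hB).1; omega
    calc #F ≤ #F' := hcard'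
      _ ≤ (2 * ℓ).choose (ℓ - 1) := ih F' hint' hanti' hsize'

lemma partition_two {n : ℕ} {P : Finset (Finset (Fin n))}
    (h : IsPartitionInto Finset.univ 2 P) : ∃ A : Finset (Fin n), P = {A, Aᶜ} := by
  obtain ⟨hcard, hne, hsub, huniq⟩ := h
  obtain ⟨A, B, hAB, rfl⟩ := card_eq_two.1 hcard
  refine ⟨A, ?_⟩
  have hBA : B = Aᶜ := by
    ext x
    simp only [mem_compl]
    obtain ⟨C, ⟨hCP, hxC⟩, hu⟩ := huniq x (mem_univ x)
    rw [mem_insert, mem_singleton] at hCP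
    constructor
    · intro hxB hxA
      have h1 : A = C := hu A ⟨mem_insert_self _ _, hxA⟩
      have h2 : B = C := hu B ⟨mem_insert_of_mem (mem_singleton_self B), hxB⟩
      exact hAB (h1.trans h2.symm)
    · intro hxA
      rcases hCP with rfl | rfl
      · exact absurd hxC hxA
      · exact hxC
  rw [hBA]

lemma compl_card' {ℓ : ℕ} (A : Finset (Fin (2 * ℓ + 1))) : #A + #Aᶜ = 2 * ℓ + 1 := by
  rw [card_add_card_compl]; simp

lemma sp_small_class {ℓ : ℕ} {P : Finset (Finset (Fin (2 * ℓ + 1)))}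
    (h : IsPartitionInto Finset.univ 2 P) :
    (P.filter fun C => #C ≤ ℓ).sup id ∈ P ∧ #((P.filter fun C => #C ≤ ℓ).sup id) ≤ ℓ := by
  obtain ⟨A, rfl⟩ := partition_two h
  have hc := compl_card' A
  by_cases hA : #A ≤ ℓ
  · have hfil : ({A, Aᶜ} : Finset (Finset (Fin (2 * ℓ + 1)))).filter (fun C => #C ≤ ℓ) = {A} := by
      rw [filter_insert, if_pos hA, filter_singleton, if_neg (by omega)]; rfl
    rw [hfil, sup_singleton]
    exact ⟨mem_insert_self _ _, hA⟩
  · have hfil : ({A, Aᶜ} : Finset (Finset (Fin (2 * ℓ + 1)))).filter (fun C => #C ≤ ℓ) = {Aᶜ} := by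
      rw [filter_insert, if_neg hA, filter_singleton, if_pos (by omega)]
    rw [hfil, sup_singleton]
    exact ⟨mem_insert_of_mem (mem_singleton_self _), by simp only [id]; omega⟩

lemma compl_mem_of_partition {ℓ : ℕ} {P : Finset (Finset (Fin (2 * ℓ + 1)))}
    (h : IsPartitionInto Finset.univ 2 P) {C : Finset (Fin (2 * ℓ + 1))} (hC : C ∈ P) :
    Cᶜ ∈ P := by
  obtain ⟨A, rfl⟩ := partition_two h
  rw [mem_insert, mem_singleton] at hC
  rcases hC with rfl | rfl
  · exact mem_insert_of_mem (mem_singleton_self _)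
  · rw [compl_compl]; exact mem_insert_self _ _

lemma sperner_upper (ℓ : ℕ) (hℓ : 1 ≤ ℓ)
    (Sys : Finset (Finset (Finset (Fin (2 * ℓ + 1)))))
    (hSys : IsSpernerPartitionSystem Finset.univ 2 Sys) :
    #Sys ≤ (2 * ℓ).choose (ℓ - 1) := by
  classical
  obtain ⟨hpart, hsper⟩ := hSys
  set f := fun P : Finset (Finset (Fin (2 * ℓ + 1))) => (P.filter fun C => #C ≤ ℓ).sup id with hf
  have hsm : ∀ P ∈ Sys, f P ∈ P ∧ #(f P) ≤ ℓ := fun P hP => sp_small_class (hpart P hP)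
  have hinj : Set.InjOn f ↑Sys := by
    intro P hP Q hQ hfPQ
    by_contra hne
    exact hsper P (mem_coe.1 hP) Q (mem_coe.1 hQ) hne (f P) (hsm P (mem_coe.1 hP)).1
      (f Q) (hsm Q (mem_coe.1 hQ)).1 (hfPQ ▸ Finset.Subset.rfl)
  set F := Sys.image f with hF
  have hFcard : #F = #Sys := card_image_of_injOn hinj
  have hmemF : ∀ A ∈ F, ∃ P ∈ Sys, f P = A := by
    intro A hA
    exact mem_image.1 hA
  have hint : (F : Set (Finset (Fin (2 * ℓ + 1)))).Intersecting := by
    intro A hA B hB hdisj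
    obtain ⟨P, hP, rfl⟩ := hmemF A (mem_coe.1 hA)
    obtain ⟨Q, hQ, rfl⟩ := hmemF B (mem_coe.1 hB)
    by_cases hPQ : P = Q
    · subst hPQ
      have hne : (f P).Nonempty := (hpart P hP).2.1 _ (hsm P hP).1
      rw [disjoint_self] at hdisj
      exact hne.ne_empty hdisj
    · have hsub : f P ⊆ (f Q)ᶜ := le_compl_iff_disjoint_right.2 hdisj
      exact hsper P hP Q hQ hPQ (f P) (hsm P hP).1 ((f Q)ᶜ)
        (compl_mem_of_partition (hpart Q hQ) (hsm Q hQ).1) hsub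
  have hanti : IsAntichain (· ⊆ ·) (F : Set (Finset (Fin (2 * ℓ + 1)))) := by
    intro A hA B hB hne hsub
    obtain ⟨P, hP, rfl⟩ := hmemF A (mem_coe.1 hA)
    obtain ⟨Q, hQ, rfl⟩ := hmemF B (mem_coe.1 hB)
    have hPQ : P ≠ Q := fun h => hne (by rw [h])
    exact hsper P hP Q hQ hPQ (f P) (hsm P hP).1 (f Q) (hsm Q hQ).1 hsub
  have hsize : ∀ A ∈ F, ℓ - ℓ ≤ #A ∧ #A ≤ ℓ := by
    intro A hA
    obtain ⟨P, hP, rfl⟩ := hmemF A hA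
    exact ⟨by omega, (hsm P hP).2⟩
  calc #Sys = #F := hFcard.symm
    _ ≤ (2 * ℓ).choose (ℓ - 1) := bollobas ℓ hℓ ℓ F hint hanti hsize

lemma sperner_lower (ℓ : ℕ) (hℓ : 1 ≤ ℓ) :
    ∃ Sys : Finset (Finset (Finset (Fin (2 * ℓ + 1)))),
      IsSpernerPartitionSystem Finset.univ 2 Sys ∧ #Sys = (2 * ℓ).choose (ℓ - 1) := by
  classical
  set n := 2 * ℓ + 1 with hn
  set G := (powersetCard ℓ (univ : Finset (Fin (2 * ℓ + 1)))).filter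
      (fun A => (0 : Fin (2 * ℓ + 1)) ∈ A) with hG
  have hGmem : ∀ A ∈ G, #A = ℓ ∧ (0 : Fin (2 * ℓ + 1)) ∈ A := by
    intro A hA
    rw [hG, mem_filter, mem_powersetCard] at hA
    exact ⟨hA.1.2, hA.2⟩
  -- cardinality of G
  have hGcard : #G = (2 * ℓ).choose (ℓ - 1) := by
    have h2l : #((univ : Finset (Fin (2 * ℓ + 1))).erase 0) = 2 * ℓ := by
      rw [card_erase_of_mem (mem_univ _), card_univ, Fintype.card_fin]; omega
    have hbij : #G = #(powersetCard (ℓ - 1) ((univ : Finset (Fin (2 * ℓ + 1))).erase 0)) := by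
      refine card_bij' (fun A _ => A.erase 0) (fun B _ => insert 0 B) ?_ ?_ ?_ ?_
      · intro A hA
        obtain ⟨hc, h0⟩ := hGmem A hA
        rw [mem_powersetCard]
        exact ⟨erase_subset_erase 0 (subset_univ A), by rw [card_erase_of_mem h0, hc]⟩
      · intro B hB
        rw [mem_powersetCard] at hB
        have h0B : (0 : Fin (2 * ℓ + 1)) ∉ B := fun h => (mem_erase.1 (hB.1 h)).1 rfl
        rw [hG, mem_filter, mem_powersetCard]
        refine ⟨⟨subset_univ _, ?_⟩, mem_insert_self _ _⟩
        rw [card_insert_of_notMem h0B, hB.2]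
        omega
      · intro A hA
        exact insert_erase (hGmem A hA).2
      · intro B hB
        rw [mem_powersetCard] at hB
        exact erase_insert (fun h => (mem_erase.1 (hB.1 h)).1 rfl)
    rw [hbij, card_powersetCard, h2l]
  set Sys := G.image (fun A => ({A, Aᶜ} : Finset (Finset (Fin (2 * ℓ + 1))))) with hSys
  have hne_compl : ∀ A ∈ G, A ≠ Aᶜ := by
    intro A hA h
    have h0 : (0 : Fin (2 * ℓ + 1)) ∈ A := (hGmem A hA).2
    rw [h, mem_compl] at h0
    exact h0 (hGmem A hA).2
  have hpart : ∀ A ∈ G, IsPartitionInto (univ : Finset (Fin (2 * ℓ + 1))) 2 ({A, Aᶜ}) := by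
    intro A hA
    obtain ⟨hAc, h0A⟩ := hGmem A hA
    have hcc := compl_card' A
    refine ⟨?_, ?_, fun C _ => subset_univ C, ?_⟩
    · rw [card_insert_of_notMem (by simp [hne_compl A hA]), card_singleton]
    · intro C hC
      rw [mem_insert, mem_singleton] at hC
      rcases hC with rfl | rfl
      · exact card_pos.1 (by omega)
      · exact card_pos.1 (by omega)
    · intro x _
      by_cases hx : x ∈ A
      · refine ⟨A, ⟨mem_insert_self _ _, hx⟩, ?_⟩
        rintro C ⟨hC, hxC⟩
        rw [mem_insert, mem_singleton] at hC
        rcases hC with rfl | rfl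
        · rfl
        · exact absurd hx (mem_compl.1 hxC)
      · refine ⟨Aᶜ, ⟨mem_insert_of_mem (mem_singleton_self _), mem_compl.2 hx⟩, ?_⟩
        rintro C ⟨hC, hxC⟩
        rw [mem_insert, mem_singleton] at hC
        rcases hC with rfl | rfl
        · exact absurd hxC hx
        · rfl
  have hinj : Set.InjOn (fun A => ({A, Aᶜ} : Finset (Finset (Fin (2 * ℓ + 1))))) ↑G := by
    intro A hA B hB h
    simp only at h
    have hmem : A ∈ ({B, Bᶜ} : Finset (Finset (Fin (2 * ℓ + 1)))) := by
      rw [← h]; exact mem_insert_self _ _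
    rw [mem_insert, mem_singleton] at hmem
    rcases hmem with rfl | rfl
    · rfl
    · exfalso
      have h0B : (0 : Fin (2 * ℓ + 1)) ∈ B := (hGmem B hB).2
      have h0A : (0 : Fin (2 * ℓ + 1)) ∈ Bᶜ := (hGmem _ hA).2
      exact (mem_compl.1 h0A) h0B
  refine ⟨Sys, ⟨?_, ?_⟩, ?_⟩
  · intro P hP
    obtain ⟨A, hA, rfl⟩ := mem_image.1 hP
    exact hpart A hA
  · intro P hP Q hQ hPQ C hC D hD hCD
    obtain ⟨A, hA, rfl⟩ := mem_image.1 hP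
    obtain ⟨B, hB, rfl⟩ := mem_image.1 hQ
    have hAB : A ≠ B := fun h => hPQ (by rw [h])
    obtain ⟨hAc, h0A⟩ := hGmem A hA
    obtain ⟨hBc, h0B⟩ := hGmem B hB
    have hccA := compl_card' A
    have hccB := compl_card' B
    rw [mem_insert, mem_singleton] at hC hD
    rcases hC with rfl | rfl <;> rcases hD with rfl | rfl
    · exact hAB (eq_of_subset_of_card_le hCD (by omega))
    · exact (mem_compl.1 (hCD h0A)) h0B
    · have := card_le_card hCD; omega
    · exact hAB ((eq_of_subset_of_card_le (compl_subset_compl.1 hCD) (by omega)).symm)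
  · rw [hSys, card_image_of_injOn hinj, hGcard]

theorem SP_two_odd (ℓ : ℕ) (hℓ : 1 ≤ ℓ) :
    SP (2 * ℓ + 1) 2 = Nat.choose (2 * ℓ) (ℓ - 1) := by
  unfold SP
  have hub : ∀ m ∈ {m | ∃ Sys : Finset (Finset (Finset (Fin (2 * ℓ + 1)))),
      IsSpernerPartitionSystem Finset.univ 2 Sys ∧ Sys.card = m},
      m ≤ (2 * ℓ).choose (ℓ - 1) := by
    rintro m ⟨Sys, hS, rfl⟩
    exact sperner_upper ℓ hℓ Sys hS
  have hmem : (2 * ℓ).choose (ℓ - 1) ∈ {m | ∃ Sys : Finset (Finset (Finset (Fin (2 * ℓ + 1)))),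
      IsSpernerPartitionSystem Finset.univ 2 Sys ∧ Sys.card = m} := by
    obtain ⟨Sys, hS, hc⟩ := sperner_lower ℓ hℓ
    exact ⟨Sys, hS, hc⟩
  exact le_antisymm (csSup_le ⟨_, hmem⟩ hub) (le_csSup ⟨_, hub⟩ hmem)
end

section
/- Let ℓ ≥ 1 be an integer. If a Sperner 2-partition system on a (2ℓ+1)-element set has exactly C(2ℓ, ℓ-1) partitions, then every partition in the system consists of one class of size ℓ and one class of size ℓ+1. -/
open Finset

open FinsetFamily in
/-- Local LYM for the upper shadow. -/
lemma upLocalLYM {n a : ℕ} (ha : a ≤ n) {𝒜 : Finset (Finset (Fin n))}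
    (h : (𝒜 : Set (Finset (Fin n))).Sized a) :
    𝒜.card * (n - a) ≤ (∂⁺ 𝒜).card * (a + 1) := by
  have h2 := h.compls
  rw [Fintype.card_fin] at h2
  have h3 := Finset.card_mul_le_card_shadow_mul h2
  rwa [Finset.shadow_compls, Finset.card_compls, Finset.card_compls, Fintype.card_fin,
    Nat.sub_sub_self ha] at h3

open FinsetFamily in
/-- Key lemma: an intersecting antichain in `Fin (2ℓ+1)` whose members have size between
`ℓ - d` and `ℓ` has at most `C(2ℓ, ℓ-1)` members, strictly fewer if some member has
size `< ℓ`. -/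
lemma key_bound (ℓ : ℕ) (hℓ : 1 ≤ ℓ) (d : ℕ) :
    ∀ F : Finset (Finset (Fin (2 * ℓ + 1))),
      (↑F : Set (Finset (Fin (2 * ℓ + 1)))).Intersecting →
      IsAntichain (· ⊆ ·) (↑F : Set (Finset (Fin (2 * ℓ + 1)))) →
      (∀ A ∈ F, ℓ - d ≤ A.card ∧ A.card ≤ ℓ) →
      F.card ≤ (2 * ℓ).choose (ℓ - 1) ∧
        ((∃ A ∈ F, A.card < ℓ) → F.card < (2 * ℓ).choose (ℓ - 1)) := by
  induction d with
  | zero =>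
    intro F hint hanti hsize
    have hsized : (↑F : Set (Finset (Fin (2 * ℓ + 1)))).Sized ℓ := by
      intro A hA
      have h1 := (hsize A hA).1
      have h2 := (hsize A hA).2
      omega
    constructor
    · have := Finset.erdos_ko_rado hint hsized (by omega)
      simpa using this
    · rintro ⟨A, hA, hAlt⟩
      exact absurd (hsized hA) (by omega)
  | succ d ih =>
    intro F hint hanti hsize
    have hne : ∀ A ∈ F, A.Nonempty := by
      intro A hA
      rw [Finset.nonempty_iff_ne_empty]
      rintro rfl
      exact hint hA hA disjoint_bot_left
    by_cases hcase : ℓ ≤ d + 1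
    · apply ih F hint hanti
      intro A hA
      have := (hne A hA).card_pos
      exact ⟨by omega, (hsize A hA).2⟩
    push_neg at hcase
    set a := ℓ - (d + 1) with hadef
    have ha1 : 1 ≤ a := by omega
    classical
    set Fa := F.filter (fun A => A.card = a) with hFadef
    set Fr := F.filter (fun A => A.card ≠ a) with hFrdef
    have hFrcard : ∀ A ∈ Fr, a + 1 ≤ A.card ∧ A.card ≤ ℓ := by
      intro A hA
      rw [hFrdef, Finset.mem_filter] at hA
      have h1 := (hsize A hA.1).1
      have h2 := (hsize A hA.1).2
      have h3 := hA.2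
      omega
    by_cases hFaE : Fa = ∅
    · apply ih F hint hanti
      intro A hA
      have h2 : A.card ≠ a := by
        intro h
        exact (Finset.eq_empty_iff_forall_notMem.1 hFaE A) (Finset.mem_filter.2 ⟨hA, h⟩)
      have h1 := (hsize A hA).1
      have h3 := (hsize A hA).2
      exact ⟨by omega, h3⟩
    -- Fa is nonempty: push it up.
    have hFaF : Fa ⊆ F := Finset.filter_subset _ _
    have hFasized : (↑Fa : Set (Finset (Fin (2 * ℓ + 1)))).Sized a := by
      intro A hA
      exact (Finset.mem_filter.1 hA).2
    have hupsized : (↑(∂⁺ Fa) : Set (Finset (Fin (2 * ℓ + 1)))).Sized (a + 1) :=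
      hFasized.upShadow
    -- the up-shadow is disjoint from F
    have hdisjF : ∀ B ∈ ∂⁺ Fa, B ∉ F := by
      intro B hB hBF
      obtain ⟨A, hA, hAB⟩ := Finset.exists_subset_of_mem_upShadow hB
      have hAa : A.card = a := hFasized hA
      have hBa : B.card = a + 1 := hupsized hB
      have hABne : A ≠ B := by
        intro h; rw [h] at hAa; omega
      exact hanti (Finset.mem_coe.2 (hFaF hA)) (Finset.mem_coe.2 hBF) hABne hAB
    set F' := Fr ∪ ∂⁺ Fa with hF'def
    have hsub' : ∀ B ∈ F', ∃ B0 ∈ F, B0 ⊆ B := by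
      intro B hB
      rw [hF'def, Finset.mem_union] at hB
      rcases hB with hB | hB
      · exact ⟨B, (Finset.mem_filter.1 hB).1, Finset.Subset.refl B⟩
      · obtain ⟨A, hA, hAB⟩ := Finset.exists_subset_of_mem_upShadow hB
        exact ⟨A, hFaF hA, hAB⟩
    have hcard' : ∀ B ∈ F', a + 1 ≤ B.card ∧ B.card ≤ ℓ := by
      intro B hB
      rw [hF'def, Finset.mem_union] at hB
      rcases hB with hB | hB
      · exact hFrcard B hB
      · have := hupsized hB
        omega
    -- F' is intersecting
    have hint' : (↑F' : Set (Finset (Fin (2 * ℓ + 1)))).Intersecting := by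
      intro B hB C hC hdis
      obtain ⟨B0, hB0, hB0B⟩ := hsub' B (Finset.mem_coe.1 hB)
      obtain ⟨C0, hC0, hC0C⟩ := hsub' C (Finset.mem_coe.1 hC)
      exact hint (Finset.mem_coe.2 hB0) (Finset.mem_coe.2 hC0)
        (hdis.mono hB0B hC0C)
    -- F' is an antichain
    have hanti' : IsAntichain (· ⊆ ·) (↑F' : Set (Finset (Fin (2 * ℓ + 1)))) := by
      intro B hB C hC hne' hBC
      have hCmem := Finset.mem_coe.1 hC
      have hBmem := Finset.mem_coe.1 hB
      rw [hF'def, Finset.mem_union] at hCmem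
      rcases hCmem with hCr | hCu
      · -- C ∈ Fr ⊆ F
        have hCF : C ∈ F := (Finset.mem_filter.1 hCr).1
        rw [hF'def, Finset.mem_union] at hBmem
        rcases hBmem with hBr | hBu
        · have hBF : B ∈ F := (Finset.mem_filter.1 hBr).1
          exact hanti (Finset.mem_coe.2 hBF) (Finset.mem_coe.2 hCF) hne' hBC
        · obtain ⟨A, hA, hAB⟩ := Finset.exists_subset_of_mem_upShadow hBu
          have hAa : A.card = a := hFasized hA
          have hACne : A ≠ C := by
            intro h
            have := (hFrcard C hCr).1
            rw [← h, hAa] at this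
            omega
          exact hanti (Finset.mem_coe.2 (hFaF hA)) (Finset.mem_coe.2 hCF) hACne
            (hAB.trans hBC)
      · -- C ∈ ∂⁺ Fa: card C = a + 1 ≤ card B, so B = C
        have hCa : C.card = a + 1 := hupsized hCu
        have hBa := (hcard' B (Finset.mem_coe.1 hB)).1
        exact hne' (Finset.eq_of_subset_of_card_le hBC (by omega))
    -- cardinalities
    have hunion : Fr ∪ Fa = F := by
      ext A
      simp only [hFrdef, hFadef, Finset.mem_union, Finset.mem_filter]
      tauto
    have hdd : Disjoint Fr Fa := by
      rw [Finset.disjoint_left]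
      intro A h1 h2
      exact (Finset.mem_filter.1 h1).2 (Finset.mem_filter.1 h2).2
    have hcardsplit : Fr.card + Fa.card = F.card := by
      rw [← Finset.card_union_of_disjoint hdd, hunion]
    have hFanon : Fa.Nonempty := Finset.nonempty_iff_ne_empty.2 hFaE
    have hlym := upLocalLYM (n := 2 * ℓ + 1) (a := a) (by omega) hFasized
    have hgrow : Fa.card < (∂⁺ Fa).card := by
      have h1 : 1 ≤ Fa.card := Finset.card_pos.2 hFanon
      have h2 : a + 2 ≤ 2 * ℓ + 1 - a := by omega
      nlinarith [hlym]
    have hdisjcard : F'.card = Fr.card + (∂⁺ Fa).card := by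
      rw [hF'def]
      rw [Finset.card_union_of_disjoint]
      rw [Finset.disjoint_right]
      intro B hBu hBr
      exact hdisjF B hBu ((Finset.mem_filter.1 hBr).1)
    have hsizes' : ∀ A ∈ F', ℓ - d ≤ A.card ∧ A.card ≤ ℓ := by
      intro A hA
      have := hcard' A hA
      omega
    have hIH := (ih F' hint' hanti' hsizes').1
    have hlt : F.card < (2 * ℓ).choose (ℓ - 1) := by omega
    exact ⟨hlt.le, fun _ => hlt⟩

theorem SP_two_odd_extremal (ℓ : ℕ) (hℓ : 1 ≤ ℓ)
    (Sys : Finset (Finset (Finset (Fin (2 * ℓ + 1)))))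
    (hS : IsSpernerPartitionSystem Finset.univ 2 Sys)
    (hcard : Sys.card = Nat.choose (2 * ℓ) (ℓ - 1)) :
    ∀ P ∈ Sys, ∃ A ∈ P, ∃ B ∈ P, P = {A, B} ∧ A.card = ℓ ∧ B.card = ℓ + 1 := by
  classical
  obtain ⟨hpart, hsper⟩ := hS
  -- structural description of each partition
  have hstruct : ∀ P ∈ Sys, ∃ A B : Finset (Fin (2 * ℓ + 1)), P = {A, B} ∧ A ≠ B ∧
      Disjoint A B ∧ A ∪ B = Finset.univ ∧ A.card ≤ ℓ ∧ A.card + B.card = 2 * ℓ + 1 := by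
    intro P hP
    obtain ⟨h2, hne, hsub, huniq⟩ := hpart P hP
    obtain ⟨A, B, hAB, hPeq⟩ := Finset.card_eq_two.1 h2
    have hdis : Disjoint A B := by
      rw [Finset.disjoint_left]
      intro x hxA hxB
      obtain ⟨C, _, hCuniq⟩ := huniq x (Finset.mem_univ x)
      have e1 := hCuniq A ⟨by simp [hPeq], hxA⟩
      have e2 := hCuniq B ⟨by simp [hPeq], hxB⟩
      exact hAB (e1.trans e2.symm)
    have hun : A ∪ B = Finset.univ := by
      apply Finset.eq_univ_of_forall
      intro x
      obtain ⟨C, ⟨hCP, hxC⟩, _⟩ := huniq x (Finset.mem_univ x)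
      rw [hPeq] at hCP
      simp only [Finset.mem_insert, Finset.mem_singleton] at hCP
      rcases hCP with rfl | rfl
      · exact Finset.mem_union_left _ hxC
      · exact Finset.mem_union_right _ hxC
    have hsum : A.card + B.card = 2 * ℓ + 1 := by
      rw [← Finset.card_union_of_disjoint hdis, hun, Finset.card_univ, Fintype.card_fin]
    by_cases h : A.card ≤ ℓ
    · exact ⟨A, B, hPeq, hAB, hdis, hun, h, hsum⟩
    · refine ⟨B, A, by rw [hPeq]; exact Finset.pair_comm A B, hAB.symm, hdis.symm,
        by rwa [Finset.union_comm], by omega, by omega⟩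
  set f : Finset (Finset (Fin (2 * ℓ + 1))) → Finset (Finset (Fin (2 * ℓ + 1))) :=
    fun P => P.filter (fun A => A.card ≤ ℓ) with hfdef
  -- each f P is a singleton {small class}
  have hfP : ∀ P ∈ Sys, ∀ A B : Finset (Fin (2 * ℓ + 1)), P = {A, B} → A.card ≤ ℓ →
      A.card + B.card = 2 * ℓ + 1 → f P = {A} := by
    intro P hP A B hPeq hAle hsum
    rw [hfdef]
    ext X
    simp only [Finset.mem_filter, hPeq, Finset.mem_insert, Finset.mem_singleton]
    constructor
    · rintro ⟨rfl | rfl, hX⟩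
      · rfl
      · omega
    · rintro rfl
      exact ⟨Or.inl rfl, hAle⟩
  set F := Sys.biUnion f with hFdef
  have hmemF : ∀ A, A ∈ F ↔ ∃ P ∈ Sys, A ∈ P ∧ A.card ≤ ℓ := by
    intro A
    rw [hFdef]
    simp only [Finset.mem_biUnion, hfdef, Finset.mem_filter]
  -- cardinality of F
  have hdisjf : ∀ P ∈ Sys, ∀ Q ∈ Sys, P ≠ Q → Disjoint (f P) (f Q) := by
    intro P hP Q hQ hne
    rw [Finset.disjoint_left]
    intro A hAP hAQ
    exact hsper P hP Q hQ hne A ((Finset.filter_subset _ _) hAP) A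
      ((Finset.filter_subset _ _) hAQ) (Finset.Subset.refl A)
  have hcardF : F.card = Sys.card := by
    rw [hFdef, Finset.card_biUnion (fun P hP Q hQ h => hdisjf P hP Q hQ h)]
    rw [Finset.card_eq_sum_ones Sys]
    apply Finset.sum_congr rfl
    intro P hP
    obtain ⟨A, B, hPeq, _, _, _, hAle, hsum⟩ := hstruct P hP
    rw [hfP P hP A B hPeq hAle hsum, Finset.card_singleton]
  -- F is an antichain
  have hanti : IsAntichain (· ⊆ ·) (↑F : Set (Finset (Fin (2 * ℓ + 1)))) := by
    intro A hA B hB hne hAB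
    obtain ⟨P, hP, hAP, hAle⟩ := (hmemF A).1 (Finset.mem_coe.1 hA)
    obtain ⟨Q, hQ, hBQ, hBle⟩ := (hmemF B).1 (Finset.mem_coe.1 hB)
    by_cases hPQ : P = Q
    · subst hPQ
      obtain ⟨A', B', hPeq, _, _, _, hA'le, hsum⟩ := hstruct P hP
      have hfPs := hfP P hP A' B' hPeq hA'le hsum
      have h1 : A ∈ f P := by rw [hfdef]; exact Finset.mem_filter.2 ⟨hAP, hAle⟩
      have h2 : B ∈ f P := by rw [hfdef]; exact Finset.mem_filter.2 ⟨hBQ, hBle⟩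
      rw [hfPs, Finset.mem_singleton] at h1 h2
      exact hne (h1.trans h2.symm)
    · exact hsper P hP Q hQ hPQ A hAP B hBQ hAB
  -- F is intersecting
  have hint : (↑F : Set (Finset (Fin (2 * ℓ + 1)))).Intersecting := by
    intro A hA B hB hdis
    obtain ⟨P, hP, hAP, hAle⟩ := (hmemF A).1 (Finset.mem_coe.1 hA)
    obtain ⟨Q, hQ, hBQ, hBle⟩ := (hmemF B).1 (Finset.mem_coe.1 hB)
    have hAne : A.Nonempty := (hpart P hP).2.1 A hAP
    by_cases hPQ : P = Q
    · subst hPQ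
      obtain ⟨A', B', hPeq, _, _, _, hA'le, hsum⟩ := hstruct P hP
      have hfPs := hfP P hP A' B' hPeq hA'le hsum
      have h1 : A ∈ f P := by rw [hfdef]; exact Finset.mem_filter.2 ⟨hAP, hAle⟩
      have h2 : B ∈ f P := by rw [hfdef]; exact Finset.mem_filter.2 ⟨hBQ, hBle⟩
      rw [hfPs, Finset.mem_singleton] at h1 h2
      subst h1; subst h2
      exact hAne.ne_empty (disjoint_self.1 hdis)
    · obtain ⟨B1, B2, hQeq, hB12, hQdis, hQun, hB1le, hQsum⟩ := hstruct Q hQ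
      have hBB1 : B = B1 := by
        have h2 : B ∈ f Q := by rw [hfdef]; exact Finset.mem_filter.2 ⟨hBQ, hBle⟩
        rw [hfP Q hQ B1 B2 hQeq hB1le hQsum, Finset.mem_singleton] at h2
        exact h2
      have hAsubB2 : A ⊆ B2 := by
        intro x hx
        have hxu : x ∈ B1 ∪ B2 := hQun ▸ Finset.mem_univ x
        rw [Finset.mem_union] at hxu
        rcases hxu with hx1 | hx2
        · exact absurd hx1 (Finset.disjoint_left.1 (hBB1 ▸ hdis) hx)
        · exact hx2
      have hB2Q : B2 ∈ Q := by rw [hQeq]; simp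
      exact hsper P hP Q hQ hPQ A hAP B2 hB2Q hAsubB2
  -- sizes
  have hsizes : ∀ A ∈ F, ℓ - (ℓ - 1) ≤ A.card ∧ A.card ≤ ℓ := by
    intro A hA
    obtain ⟨P, hP, hAP, hAle⟩ := (hmemF A).1 hA
    have := ((hpart P hP).2.1 A hAP).card_pos
    exact ⟨by omega, hAle⟩
  have hkey := key_bound ℓ hℓ (ℓ - 1) F hint hanti hsizes
  have hallℓ : ∀ A ∈ F, A.card = ℓ := by
    intro A hA
    by_contra h
    have hlt : A.card < ℓ := by
      have := (hsizes A hA).2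
      omega
    have := hkey.2 ⟨A, hA, hlt⟩
    omega
  -- conclusion
  intro P hP
  obtain ⟨A, B, hPeq, hAB, hdis, hun, hAle, hsum⟩ := hstruct P hP
  have hAP : A ∈ P := by rw [hPeq]; simp
  have hBP : B ∈ P := by rw [hPeq]; simp
  have hAF : A ∈ F := (hmemF A).2 ⟨P, hP, hAP, hAle⟩
  have hAcard : A.card = ℓ := hallℓ A hAF
  exact ⟨A, hAP, B, hBP, hPeq, hAcard, by omega⟩
end

section
/- For every integer k ≥ 1, SP(2k+1, k) ≤ 2k; that is, every Sperner k-partition system on a (2k+1)-element set has at most 2k partitions. -/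
open Finset

lemma sum_card_classes {α : Type*} [DecidableEq α] [Fintype α] {k : ℕ}
    {P : Finset (Finset α)} (h : IsPartitionInto Finset.univ k P) :
    ∑ A ∈ P, A.card = Fintype.card α := by
  obtain ⟨hk, hne, hsub, huniq⟩ := h
  have hdisj : ∀ A ∈ P, ∀ B ∈ P, A ≠ B → Disjoint A B := by
    intro A hA B hB hAB
    rw [Finset.disjoint_left]
    intro y hyA hyB
    obtain ⟨C, hC, hCuniq⟩ := huniq y (mem_univ y)
    exact hAB ((hCuniq A ⟨hA, hyA⟩).trans (hCuniq B ⟨hB, hyB⟩).symm)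
  have hbu : P.biUnion id = univ := by
    ext y
    simp only [mem_biUnion, id, mem_univ, iff_true]
    obtain ⟨C, ⟨hC, hyC⟩, _⟩ := huniq y (mem_univ y)
    exact ⟨C, hC, hyC⟩
  calc ∑ A ∈ P, A.card = (P.biUnion id).card := (Finset.card_biUnion hdisj).symm
    _ = Fintype.card α := by rw [hbu, Finset.card_univ]

lemma sys_card_le (k : ℕ) (hk : 1 ≤ k) (Sys : Finset (Finset (Finset (Fin (2 * k + 1)))))
    (hSys : IsSpernerPartitionSystem Finset.univ k Sys) : Sys.card ≤ 2 * k := by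
  classical
  by_contra hbig
  push_neg at hbig
  obtain ⟨hpart, hsp⟩ := hSys
  set s := Sys.card with hsdef
  have hs1 : 2 * k + 1 ≤ s := hbig
  -- class function
  have hcl' : ∀ P : Finset (Finset (Fin (2 * k + 1))), ∀ x,
      ∃ A, P ∈ Sys → A ∈ P ∧ x ∈ A ∧ ∀ B ∈ P, x ∈ B → B = A := by
    intro P x
    by_cases hP : P ∈ Sys
    · obtain ⟨A, ⟨hA, hxA⟩, huniq⟩ := (hpart P hP).2.2.2 x (mem_univ x)
      exact ⟨A, fun _ => ⟨hA, hxA, fun B hB hxB => huniq B ⟨hB, hxB⟩⟩⟩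
    · exact ⟨∅, fun h => absurd h hP⟩
  choose cl hcl using hcl'
  have hclmem : ∀ P ∈ Sys, ∀ x, cl P x ∈ P := fun P hP x => (hcl P x hP).1
  have hclx : ∀ P ∈ Sys, ∀ x, x ∈ cl P x := fun P hP x => (hcl P x hP).2.1
  have hcluniq : ∀ P ∈ Sys, ∀ x, ∀ B ∈ P, x ∈ B → B = cl P x :=
    fun P hP x => (hcl P x hP).2.2
  -- no singletons
  have htwo : ∀ P ∈ Sys, ∀ A ∈ P, 2 ≤ A.card := by
    intro P hP A hA
    obtain ⟨y, hy⟩ := (hpart P hP).2.1 A hA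
    by_contra hlt
    push_neg at hlt
    have hA1 : A = {y} := by
      have h1 : A.card ≤ 1 := by omega
      have := Finset.card_le_one.mp h1
      exact Finset.eq_singleton_iff_unique_mem.mpr ⟨hy, fun z hz => this z hz y hy⟩
    have hgt1 : 1 < Sys.card := by omega
    obtain ⟨Q, hQ, hQP⟩ := Finset.exists_mem_ne hgt1 P
    refine hsp P hP Q hQ (Ne.symm hQP) A hA (cl Q y) (hclmem Q hQ y) ?_
    rw [hA1]
    exact Finset.singleton_subset_iff.mpr (hclx Q hQ y)
  -- structure of partitions
  have hstruct : ∀ P ∈ Sys, (∀ A ∈ P, A.card = 2 ∨ A.card = 3) ∧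
      (P.filter fun A => A.card = 3).card = 1 := by
    intro P hP
    have hsum : ∑ A ∈ P, A.card = 2 * k + 1 := by
      have h := sum_card_classes (hpart P hP)
      simpa using h
    have hcardP : P.card = k := (hpart P hP).1
    have hsum2 : ∑ A ∈ P, (A.card - 2) = 1 := by
      have h1 : ∑ A ∈ P, A.card = ∑ A ∈ P, ((A.card - 2) + 2) :=
        Finset.sum_congr rfl (fun A hA => by have := htwo P hP A hA; omega)
      rw [Finset.sum_add_distrib, Finset.sum_const, hcardP, smul_eq_mul] at h1
      omega
    have hle3 : ∀ A ∈ P, A.card ≤ 3 := by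
      intro A hA
      have h : A.card - 2 ≤ ∑ B ∈ P, (B.card - 2) :=
        Finset.single_le_sum (f := fun B : Finset (Fin (2 * k + 1)) => B.card - 2)
          (fun _ _ => Nat.zero_le _) hA
      omega
    refine ⟨fun A hA => by have := htwo P hP A hA; have := hle3 A hA; omega, ?_⟩
    have heq : ∑ A ∈ P.filter (fun A => A.card = 3), (A.card - 2) = 1 := by
      rw [Finset.sum_filter]
      calc (∑ A ∈ P, if A.card = 3 then A.card - 2 else 0) = ∑ A ∈ P, (A.card - 2) := by
            apply Finset.sum_congr rfl
            intro A hA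
            have h2 := htwo P hP A hA
            have h3 := hle3 A hA
            by_cases h : A.card = 3
            · simp [h]
            · simp only [h, if_false]
              omega
        _ = 1 := hsum2
    have heq2 : ∑ A ∈ P.filter (fun A => A.card = 3), (A.card - 2) =
        ∑ A ∈ P.filter (fun A => A.card = 3), 1 := by
      apply Finset.sum_congr rfl
      intro A hA
      rw [Finset.mem_filter] at hA
      omega
    rw [heq2, Finset.sum_const, smul_eq_mul, mul_one] at heq
    exact heq
  -- each partition's triple covers exactly 3 points
  have hS2 : ∀ P ∈ Sys,
      (univ.filter fun x : Fin (2 * k + 1) => (cl P x).card = 3).card = 3 := by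
    intro P hP
    obtain ⟨hA23, h1⟩ := hstruct P hP
    obtain ⟨T, hT⟩ := Finset.card_eq_one.mp h1
    have hTP : T ∈ P ∧ T.card = 3 := by
      have : T ∈ P.filter (fun A => A.card = 3) := hT ▸ Finset.mem_singleton_self T
      simpa using this
    have hfe : univ.filter (fun x : Fin (2 * k + 1) => (cl P x).card = 3) = T := by
      ext y
      simp only [Finset.mem_filter, Finset.mem_univ, true_and]
      constructor
      · intro h3
        have hm : cl P y ∈ P.filter (fun A => A.card = 3) :=
          Finset.mem_filter.mpr ⟨hclmem P hP y, h3⟩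
        rw [hT, Finset.mem_singleton] at hm
        exact hm ▸ hclx P hP y
      · intro hyT
        have := hcluniq P hP y T hTP.1 hyT
        rw [← this]
        exact hTP.2
    rw [hfe]
    exact hTP.2
  -- double counting
  have hsum3 : ∑ x : Fin (2 * k + 1), (Sys.filter fun P => (cl P x).card = 3).card
      = 3 * s := by
    have h1 : ∀ x : Fin (2 * k + 1), (Sys.filter fun P => (cl P x).card = 3).card
        = ∑ P ∈ Sys, if (cl P x).card = 3 then 1 else 0 := by
      intro x
      rw [Finset.card_filter]
    calc ∑ x : Fin (2 * k + 1), (Sys.filter fun P => (cl P x).card = 3).card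
        = ∑ x : Fin (2 * k + 1), ∑ P ∈ Sys, if (cl P x).card = 3 then 1 else 0 := by
          exact Finset.sum_congr rfl (fun x _ => h1 x)
      _ = ∑ P ∈ Sys, ∑ x : Fin (2 * k + 1), if (cl P x).card = 3 then 1 else 0 :=
          Finset.sum_comm
      _ = ∑ P ∈ Sys, (univ.filter fun x : Fin (2 * k + 1) => (cl P x).card = 3).card := by
          exact Finset.sum_congr rfl (fun P _ => (Finset.card_filter _ _).symm)
      _ = ∑ _P ∈ Sys, 3 := Finset.sum_congr rfl (fun P hP => hS2 P hP)
      _ = 3 * s := by rw [Finset.sum_const, smul_eq_mul, ← hsdef]; ring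
  -- per-point inequality
  have hperx : ∀ x : Fin (2 * k + 1),
      s + 4 ≤ (Sys.filter fun P => (cl P x).card = 3).card + 2 * k := by
    intro x
    set m := (Sys.filter fun P => (cl P x).card = 3).card with hm
    set co : Finset (Finset (Fin (2 * k + 1))) → Finset (Fin (2 * k + 1)) :=
      fun P => (cl P x).erase x with hcodef
    have hins : ∀ P ∈ Sys, insert x (co P) = cl P x := by
      intro P hP
      exact Finset.insert_erase (hclx P hP x)
    have hinj : Set.InjOn co ↑Sys := by
      intro P hP Q hQ heq
      simp only [Finset.mem_coe] at hP hQ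
      by_contra hne
      have h1 : cl P x = cl Q x := by
        rw [← hins P hP, ← hins Q hQ, heq]
      exact hsp P hP Q hQ hne (cl P x) (hclmem P hP x) (cl Q x) (hclmem Q hQ x)
        (h1 ▸ subset_rfl)
    have hcard_co : ∀ P ∈ Sys, (co P).card = (cl P x).card - 1 := by
      intro P hP
      exact Finset.card_erase_of_mem (hclx P hP x)
    have hkey : ∀ P ∈ Sys, ∀ Q ∈ Sys, P ≠ Q → ∀ y, co P = {y} → y ∉ co Q := by
      intro P hP Q hQ hne y hPy hyQ
      have hxQ := hclx Q hQ x
      have hyclQ : y ∈ cl Q x := Finset.mem_of_mem_erase hyQ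
      have hsub : cl P x ⊆ cl Q x := by
        rw [← hins P hP, hPy]
        intro z hz
        simp only [Finset.mem_insert, Finset.mem_singleton] at hz
        rcases hz with rfl | rfl
        · exact hxQ
        · exact hyclQ
      exact hsp P hP Q hQ hne (cl P x) (hclmem P hP x) (cl Q x) (hclmem Q hQ x) hsub
    set Sys3 := Sys.filter (fun P => (cl P x).card = 3) with hS3def
    set Sys2 := Sys.filter (fun P => ¬ (cl P x).card = 3) with hS2def
    have hsplit : m + Sys2.card = s := by
      rw [hm, hS2def, hsdef]
      exact Finset.card_filter_add_card_filter_not _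
    set I1 := Sys2.image co with hI1def
    set I2 := Sys3.image co with hI2def
    have hI1card : I1.card = Sys2.card :=
      Finset.card_image_of_injOn (hinj.mono (by
        intro P hP; simp only [Finset.mem_coe] at *; exact Finset.mem_of_mem_filter P hP))
    have hI2card : I2.card = m := by
      rw [hI2def, Finset.card_image_of_injOn (hinj.mono (by
        intro P hP; simp only [Finset.mem_coe] at *; exact Finset.mem_of_mem_filter P hP))]
    have hco1 : ∀ P ∈ Sys2, (co P).card = 1 := by
      intro P hP
      rw [hS2def, Finset.mem_filter] at hP
      have h23 := (hstruct P hP.1).1 (cl P x) (hclmem P hP.1 x)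
      have := hcard_co P hP.1
      omega
    have hco2 : ∀ P ∈ Sys3, (co P).card = 2 := by
      intro P hP
      rw [hS3def, Finset.mem_filter] at hP
      have := hcard_co P hP.1
      omega
    set C := I2.biUnion id with hCdef
    set c := C.card with hcdef
    have hmle : m ≤ c.choose 2 := by
      rw [← hI2card]
      have hsubp : I2 ⊆ C.powersetCard 2 := by
        intro B hB
        rw [Finset.mem_powersetCard]
        constructor
        · exact Finset.subset_biUnion_of_mem id hB
        · obtain ⟨P, hP, rfl⟩ := Finset.mem_image.mp hB
          exact hco2 P hP
      calc I2.card ≤ (C.powersetCard 2).card := Finset.card_le_card hsubp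
        _ = c.choose 2 := by rw [Finset.card_powersetCard]
    set U1 := I1.biUnion id with hU1def
    have hU1card : U1.card = I1.card := by
      rw [hU1def, Finset.card_biUnion]
      · have : ∀ B ∈ I1, (id B : Finset (Fin (2 * k + 1))).card = 1 := by
          intro B hB
          obtain ⟨P, hP, rfl⟩ := Finset.mem_image.mp hB
          exact hco1 P hP
        rw [Finset.sum_congr rfl this, Finset.sum_const, smul_eq_mul, mul_one]
      · have hsing : ∀ B ∈ I1, ∃ a, B = {a} := by
          intro B hB
          obtain ⟨P, hP, rfl⟩ := Finset.mem_image.mp hB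
          exact Finset.card_eq_one.mp (hco1 P hP)
        intro B hB B' hB' hne
        obtain ⟨a, rfl⟩ := hsing B hB
        obtain ⟨b, rfl⟩ := hsing B' hB'
        simp only [Function.onFun, id_eq]
        rw [Finset.disjoint_singleton]
        intro hab
        exact hne (by rw [hab])
    have hdisjU1C : Disjoint U1 C := by
      rw [Finset.disjoint_left]
      intro y hyU1 hyC
      rw [hU1def, Finset.mem_biUnion] at hyU1
      obtain ⟨B, hB, hyB⟩ := hyU1
      obtain ⟨P, hP, rfl⟩ := Finset.mem_image.mp hB
      rw [hCdef, Finset.mem_biUnion] at hyC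
      obtain ⟨B', hB', hyB'⟩ := hyC
      obtain ⟨Q, hQ, rfl⟩ := Finset.mem_image.mp hB'
      have hPQ : P ≠ Q := by
        intro h
        have h1 := hco1 P hP
        have h2 := hco2 Q hQ
        rw [h] at h1
        omega
      simp only [id_eq] at hyB hyB'
      have hcoP : co P = {y} := by
        obtain ⟨a, ha⟩ := Finset.card_eq_one.mp (hco1 P hP)
        rw [ha, Finset.mem_singleton] at hyB
        rw [ha, hyB]
      rw [hS2def, Finset.mem_filter] at hP
      rw [hS3def, Finset.mem_filter] at hQ
      exact hkey P hP.1 Q hQ.1 hPQ y hcoP hyB'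
    have hsubuniv : U1 ∪ C ⊆ univ.erase x := by
      intro y hy
      rw [Finset.mem_erase]
      refine ⟨?_, Finset.mem_univ y⟩
      rw [Finset.mem_union] at hy
      rcases hy with hy | hy
      · rw [hU1def, Finset.mem_biUnion] at hy
        obtain ⟨B, hB, hyB⟩ := hy
        obtain ⟨P, hP, rfl⟩ := Finset.mem_image.mp hB
        exact Finset.ne_of_mem_erase hyB
      · rw [hCdef, Finset.mem_biUnion] at hy
        obtain ⟨B, hB, hyB⟩ := hy
        obtain ⟨P, hP, rfl⟩ := Finset.mem_image.mp hB
        exact Finset.ne_of_mem_erase hyB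
    have hle2k : U1.card + c ≤ 2 * k := by
      have h1 : (U1 ∪ C).card = U1.card + C.card :=
        Finset.card_union_of_disjoint hdisjU1C
      have h2 : (U1 ∪ C).card ≤ (univ.erase x).card := Finset.card_le_card hsubuniv
      have h3 : ((univ : Finset (Fin (2 * k + 1))).erase x).card = 2 * k := by
        rw [Finset.card_erase_of_mem (Finset.mem_univ x), Finset.card_univ,
          Fintype.card_fin]
        omega
      omega
    have hmc1 : c + 1 ≤ m := by
      have := hU1card
      omega
    have hc4 : 4 ≤ c := by
      by_contra hc
      push_neg at hc
      interval_cases c <;> simp [Nat.choose] at hmle <;> omega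
    omega
  -- sum up and conclude
  have hfinal : (2 * k + 1) * (s + 4) ≤ 3 * s + (2 * k + 1) * (2 * k) := by
    have h1 : ∑ _x : Fin (2 * k + 1), (s + 4)
        ≤ ∑ x : Fin (2 * k + 1), ((Sys.filter fun P => (cl P x).card = 3).card + 2 * k) :=
      Finset.sum_le_sum (fun x _ => hperx x)
    rw [Finset.sum_add_distrib, Finset.sum_add_distrib, hsum3] at h1
    simp only [Finset.sum_const, Finset.card_univ, Fintype.card_fin, smul_eq_mul] at h1
    nlinarith [h1]
  obtain ⟨e, he⟩ := Nat.exists_eq_add_of_le hs1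
  rw [he] at hfinal
  have hke : e ≤ k * e := Nat.le_mul_of_pos_left e (by omega)
  nlinarith [hfinal, hke, hk]

theorem SP_two_k_add_one_upper (k : ℕ) (hk : 1 ≤ k) :
    SP (2 * k + 1) k ≤ 2 * k := by
  apply csSup_le'
  rintro m ⟨Sys, hSys, rfl⟩
  exact sys_card_le k hk Sys hSys
end

section
/- For every integer k ≥ 1, SP(2k+1, k) ≥ 2k - 1; that is, there exists a Sperner k-partition system on a (2k+1)-element set with at least 2k-1 partitions. -/
open Finset

set_option linter.unusedSectionVars false

section SPconstr

variable (k : ℕ)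

private def inf1 : Fin (2*k+1) := ⟨2*k-1, by omega⟩
private def inf2 : Fin (2*k+1) := ⟨2*k, by omega⟩
private def emb (x : ZMod (2*k-1)) : Fin (2*k+1) := ⟨x.val % (2*k+1), Nat.mod_lt _ (by omega)⟩
private def tri (i : ZMod (2*k-1)) : Finset (Fin (2*k+1)) := {emb k i, inf1 k, inf2 k}
private def pr (i : ZMod (2*k-1)) (j : ℕ) : Finset (Fin (2*k+1)) :=
  {emb k (i + (j : ZMod (2*k-1))), emb k (i - (j : ZMod (2*k-1)))}
private def part (i : ZMod (2*k-1)) : Finset (Finset (Fin (2*k+1))) :=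
  insert (tri k i) ((Finset.Icc 1 (k-1)).image (pr k i))

end SPconstr

section SPlemmas

variable {k : ℕ} (hk : 1 ≤ k)

include hk

private lemma emb_val (x : ZMod (2*k-1)) : (emb k x).val = x.val := by
  haveI : NeZero (2*k-1) := ⟨by omega⟩
  have h1 : x.val < 2*k+1 := lt_of_lt_of_le (ZMod.val_lt x) (by omega)
  simp [emb, Nat.mod_eq_of_lt h1]

private lemma emb_inj : Function.Injective (emb k) := by
  haveI : NeZero (2*k-1) := ⟨by omega⟩
  intro a b h
  apply ZMod.val_injective
  have := congrArg Fin.val h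
  rwa [emb_val hk, emb_val hk] at this

private lemma emb_ne_inf1 (x : ZMod (2*k-1)) : emb k x ≠ inf1 k := by
  haveI : NeZero (2*k-1) := ⟨by omega⟩
  intro h
  have h2 := congrArg Fin.val h
  rw [emb_val hk] at h2
  have := ZMod.val_lt x
  simp only [inf1] at h2
  omega

private lemma emb_ne_inf2 (x : ZMod (2*k-1)) : emb k x ≠ inf2 k := by
  haveI : NeZero (2*k-1) := ⟨by omega⟩
  intro h
  have h2 := congrArg Fin.val h
  rw [emb_val hk] at h2
  have := ZMod.val_lt x
  simp only [inf2] at h2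
  omega

private lemma cast_injj {j j' : ℕ} (hj : j < 2*k-1) (hj' : j' < 2*k-1)
    (h : (j : ZMod (2*k-1)) = (j' : ZMod (2*k-1))) : j = j' := by
  haveI : NeZero (2*k-1) := ⟨by omega⟩
  have := ZMod.val_cast_of_lt hj
  have := ZMod.val_cast_of_lt hj'
  rw [h] at *
  omega

private lemma cast_nz {j : ℕ} (h1 : 1 ≤ j) (h2 : j < 2*k-1) : (j : ZMod (2*k-1)) ≠ 0 := by
  haveI : NeZero (2*k-1) := ⟨by omega⟩
  intro h
  have := ZMod.val_cast_of_lt h2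
  rw [h, ZMod.val_zero] at this
  omega

private lemma two_inj {a b : ZMod (2*k-1)} (h : a + a = b + b) : a = b := by
  haveI : NeZero (2*k-1) := ⟨by omega⟩
  have h2 : IsUnit (2 : ZMod (2*k-1)) := by
    have : IsUnit ((2:ℕ) : ZMod (2*k-1)) :=
      (ZMod.isUnit_iff_coprime 2 (2*k-1)).2 (Nat.coprime_two_left.2 ⟨k-1, by omega⟩)
    simpa using this
  refine h2.mul_left_cancel ?_
  linear_combination h

private lemma mem_tri' {x : Fin (2*k+1)} {i : ZMod (2*k-1)} :
    x ∈ tri k i ↔ x = emb k i ∨ x = inf1 k ∨ x = inf2 k := by simp [tri]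

private lemma mem_pr' {x : Fin (2*k+1)} {i : ZMod (2*k-1)} {j : ℕ} :
    x ∈ pr k i j ↔ x = emb k (i + (j:ZMod (2*k-1))) ∨ x = emb k (i - (j:ZMod (2*k-1))) := by
  simp [pr]

private lemma mem_part' {A : Finset (Fin (2*k+1))} {i : ZMod (2*k-1)} :
    A ∈ part k i ↔ A = tri k i ∨ ∃ j, (1 ≤ j ∧ j ≤ k-1) ∧ A = pr k i j := by
  simp only [part, mem_insert, mem_image, Finset.mem_Icc]
  constructor
  · rintro (h | ⟨j, hj, rfl⟩)
    · exact Or.inl h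
    · exact Or.inr ⟨j, hj, rfl⟩
  · rintro (h | ⟨j, hj, rfl⟩)
    · exact Or.inl h
    · exact Or.inr ⟨j, hj, rfl⟩

private lemma inf1_notMem_pr {i : ZMod (2*k-1)} {j : ℕ} : inf1 k ∉ pr k i j := by
  rw [mem_pr' hk]
  push_neg
  exact ⟨fun h => emb_ne_inf1 hk _ h.symm, fun h => emb_ne_inf1 hk _ h.symm⟩

private lemma add_ne_sub {i : ZMod (2*k-1)} {j : ℕ} (h1 : 1 ≤ j) (h2 : j ≤ k-1) :
    i + (j:ZMod (2*k-1)) ≠ i - (j:ZMod (2*k-1)) := by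
  intro h
  have hz : ((j + j : ℕ) : ZMod (2*k-1)) = 0 := by push_cast; linear_combination h
  exact cast_nz hk (by omega) (by omega) hz

private lemma pr_subset_cases {i i' : ZMod (2*k-1)} {j j' : ℕ}
    (hj : 1 ≤ j ∧ j ≤ k-1) (hj' : 1 ≤ j' ∧ j' ≤ k-1)
    (h : pr k i j ⊆ pr k i' j') : i = i' ∧ j = j' := by
  have m1 : emb k (i + (j:ZMod (2*k-1))) ∈ pr k i j := by rw [mem_pr' hk]; left; rfl
  have m2 : emb k (i - (j:ZMod (2*k-1))) ∈ pr k i j := by rw [mem_pr' hk]; right; rfl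
  have h1 := (mem_pr' hk).1 (h m1)
  have h2 := (mem_pr' hk).1 (h m2)
  rcases h1 with h1 | h1 <;> rcases h2 with h2 | h2 <;>
    [skip; skip; skip; skip]
  · -- i+j = i'+j', i-j = i'+j'
    exact absurd ((emb_inj hk h1).trans (emb_inj hk h2).symm) (add_ne_sub hk hj.1 hj.2)
  · -- i+j = i'+j', i-j = i'-j'
    have e1 := emb_inj hk h1
    have e2 := emb_inj hk h2
    have hjj : ((j + j : ℕ) : ZMod (2*k-1)) = ((j' + j' : ℕ) : ZMod (2*k-1)) := by
      push_cast; linear_combination e1 - e2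
    have hnat : j + j = j' + j' := cast_injj hk (by omega) (by omega) hjj
    have hjeq : j = j' := by omega
    subst hjeq
    exact ⟨by linear_combination e1, rfl⟩
  · -- i+j = i'-j', i-j = i'+j'
    have e1 := emb_inj hk h1
    have e2 := emb_inj hk h2
    have hii : i = i' := two_inj hk (by linear_combination e1 + e2)
    subst hii
    have hz : ((j + j' : ℕ) : ZMod (2*k-1)) = 0 := by push_cast; linear_combination e1
    exact absurd hz (cast_nz hk (by omega) (by omega))
  · -- i+j = i'-j', i-j = i'-j'
    exact absurd ((emb_inj hk h1).trans (emb_inj hk h2).symm) (add_ne_sub hk hj.1 hj.2)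

private lemma tri_subset_tri {i i' : ZMod (2*k-1)} (h : tri k i ⊆ tri k i') : i = i' := by
  have := (mem_tri' hk).1 (h (by rw [mem_tri' hk]; left; rfl))
  rcases this with h1 | h1 | h1
  · exact emb_inj hk h1
  · exact absurd h1 (emb_ne_inf1 hk i)
  · exact absurd h1 (emb_ne_inf2 hk i)

private lemma not_tri_subset_pr {i i' : ZMod (2*k-1)} {j : ℕ} : ¬ tri k i ⊆ pr k i' j := by
  intro h
  exact inf1_notMem_pr hk (h (by rw [mem_tri' hk]; right; left; rfl))

private lemma not_pr_subset_tri {i i' : ZMod (2*k-1)} {j : ℕ} (h1 : 1 ≤ j) (h2 : j ≤ k-1) :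
    ¬ pr k i j ⊆ tri k i' := by
  intro h
  have m1 := (mem_tri' hk).1 (h (by rw [mem_pr' hk]; left; rfl))
  have m2 := (mem_tri' hk).1 (h (by rw [mem_pr' hk]; right; rfl))
  have e1 : i + (j:ZMod (2*k-1)) = i' := by
    rcases m1 with h' | h' | h'
    · exact emb_inj hk h'
    · exact absurd h' (emb_ne_inf1 hk _)
    · exact absurd h' (emb_ne_inf2 hk _)
  have e2 : i - (j:ZMod (2*k-1)) = i' := by
    rcases m2 with h' | h' | h'
    · exact emb_inj hk h'
    · exact absurd h' (emb_ne_inf1 hk _)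
    · exact absurd h' (emb_ne_inf2 hk _)
  exact add_ne_sub hk h1 h2 (e1.trans e2.symm)

private lemma part_card (i : ZMod (2*k-1)) : (part k i).card = k := by
  have hni : tri k i ∉ (Finset.Icc 1 (k-1)).image (pr k i) := by
    intro h
    obtain ⟨j, hj, hpr⟩ := mem_image.1 h
    exact not_tri_subset_pr hk (by rw [hpr])
  have hinj : Set.InjOn (pr k i) (Finset.Icc 1 (k-1)) := by
    intro j hj j' hj' h
    simp only [coe_Icc, Set.mem_Icc] at hj hj'
    exact (pr_subset_cases hk hj hj' (by rw [h])).2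
  rw [part, card_insert_of_notMem hni, card_image_of_injOn hinj, Nat.card_Icc]
  omega

private lemma exists_mem_part (i : ZMod (2*k-1)) (x : Fin (2*k+1)) :
    ∃ A ∈ part k i, x ∈ A := by
  haveI : NeZero (2*k-1) := ⟨by omega⟩
  by_cases hx : 2*k-1 ≤ x.val
  · refine ⟨tri k i, mem_insert_self _ _, ?_⟩
    rw [mem_tri' hk]
    have hlt := x.isLt
    by_cases h1 : x.val = 2*k-1
    · exact Or.inr (Or.inl (Fin.ext (by simp [inf1, h1])))
    · exact Or.inr (Or.inr (Fin.ext (by simp [inf2]; omega)))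
  · push_neg at hx
    set m : ZMod (2*k-1) := (x.val : ZMod (2*k-1)) with hm
    have hxm : x = emb k m := by
      apply Fin.ext
      rw [emb_val hk, hm, ZMod.val_cast_of_lt hx]
    set d := (m - i).val with hd
    have hdlt : d < 2*k-1 := ZMod.val_lt _
    have hcast : ((d : ℕ) : ZMod (2*k-1)) = m - i := by
      rw [hd]; simp [ZMod.natCast_val, ZMod.cast_id]
    by_cases h0 : d = 0
    · have hmi : m = i := by
        have : m - i = 0 := by rw [← hcast, h0, Nat.cast_zero]
        have := sub_eq_zero.1 this
        exact this
      exact ⟨tri k i, mem_insert_self _ _, by rw [hxm, hmi, mem_tri' hk]; left; rfl⟩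
    by_cases h1 : d ≤ k-1
    · refine ⟨pr k i d, ?_, ?_⟩
      · exact mem_insert_of_mem (mem_image_of_mem _ (by rw [Finset.mem_Icc]; omega))
      · rw [mem_pr' hk]; left; rw [hxm]; congr 1; rw [hcast]; ring
    · refine ⟨pr k i (2*k-1-d), ?_, ?_⟩
      · refine mem_insert_of_mem (mem_image_of_mem _ (by rw [Finset.mem_Icc]; omega))
      · rw [mem_pr' hk]; right; rw [hxm]
        congr 1
        have hsum : ((2*k-1-d) + d : ℕ) = 2*k-1 := by omega
        have h2 : ((2*k-1-d:ℕ) : ZMod (2*k-1)) + (d:ℕ) = ((2*k-1 : ℕ) : ZMod (2*k-1)) := by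
          rw [← Nat.cast_add, hsum]
        rw [ZMod.natCast_self] at h2
        have : ((2*k-1-d:ℕ) : ZMod (2*k-1)) = -(d : ZMod (2*k-1)) := by linear_combination h2
        rw [this, hcast]
        ring

private lemma part_disj {i : ZMod (2*k-1)} {A B : Finset (Fin (2*k+1))} {x : Fin (2*k+1)}
    (hA : A ∈ part k i) (hB : B ∈ part k i) (hxA : x ∈ A) (hxB : x ∈ B) : A = B := by
  rw [mem_part' hk] at hA hB
  rcases hA with rfl | ⟨j, hj, rfl⟩ <;> rcases hB with rfl | ⟨j', hj', rfl⟩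
  · rfl
  · -- x ∈ tri i, x ∈ pr i j'
    exfalso
    rw [mem_pr' hk] at hxB
    rw [mem_tri' hk] at hxA
    rcases hxB with rfl | rfl
    · rcases hxA with h' | h' | h'
      · have := emb_inj hk h'
        exact cast_nz hk hj'.1 (by omega) (by linear_combination this)
      · exact emb_ne_inf1 hk _ h'
      · exact emb_ne_inf2 hk _ h'
    · rcases hxA with h' | h' | h'
      · have := emb_inj hk h'
        exact cast_nz hk hj'.1 (by omega) (by linear_combination - this)
      · exact emb_ne_inf1 hk _ h'
      · exact emb_ne_inf2 hk _ h'
  · -- symmetric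
    exfalso
    rw [mem_pr' hk] at hxA
    rw [mem_tri' hk] at hxB
    rcases hxA with rfl | rfl
    · rcases hxB with h' | h' | h'
      · have := emb_inj hk h'
        exact cast_nz hk hj.1 (by omega) (by linear_combination this)
      · exact emb_ne_inf1 hk _ h'
      · exact emb_ne_inf2 hk _ h'
    · rcases hxB with h' | h' | h'
      · have := emb_inj hk h'
        exact cast_nz hk hj.1 (by omega) (by linear_combination - this)
      · exact emb_ne_inf1 hk _ h'
      · exact emb_ne_inf2 hk _ h'
  · -- x ∈ pr i j ∩ pr i j'
    rw [mem_pr' hk] at hxA hxB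
    have hjj : j = j' := by
      rcases hxA with rfl | rfl <;> rcases hxB with h' | h' <;> have e := emb_inj hk h'
      · exact cast_injj hk (by omega) (by omega) (by linear_combination e)
      · exfalso
        have hz : ((j + j' : ℕ) : ZMod (2*k-1)) = 0 := by push_cast; linear_combination e
        exact cast_nz hk (by omega) (by omega) hz
      · exfalso
        have hz : ((j + j' : ℕ) : ZMod (2*k-1)) = 0 := by push_cast; linear_combination - e
        exact cast_nz hk (by omega) (by omega) hz
      · have : (j : ZMod (2*k-1)) = (j' : ZMod (2*k-1)) := by linear_combination - e
        exact cast_injj hk (by omega) (by omega) this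
    rw [hjj]

private lemma part_isPartition (i : ZMod (2*k-1)) :
    IsPartitionInto Finset.univ k (part k i) := by
  refine ⟨part_card hk i, ?_, fun A _ => subset_univ A, ?_⟩
  · intro A hA
    rw [mem_part' hk] at hA
    rcases hA with rfl | ⟨j, hj, rfl⟩
    · exact insert_nonempty _ _
    · exact insert_nonempty _ _
  · intro x _
    obtain ⟨A, hA, hxA⟩ := exists_mem_part hk i x
    exact ⟨A, ⟨hA, hxA⟩, fun B ⟨hB, hxB⟩ => part_disj hk hB hA hxB hxA⟩

private lemma part_inj : Function.Injective (part k) := by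
  intro i i' h
  have : tri k i ∈ part k i' := h ▸ mem_insert_self _ _
  rw [mem_part' hk] at this
  rcases this with h' | ⟨j, hj, h'⟩
  · exact tri_subset_tri hk (by rw [h'])
  · exact absurd (show tri k i ⊆ pr k i' j by rw [h']) (not_tri_subset_pr hk)

private lemma part_sperner {i i' : ZMod (2*k-1)} (hne : i ≠ i')
    {A B : Finset (Fin (2*k+1))} (hA : A ∈ part k i) (hB : B ∈ part k i') : ¬ A ⊆ B := by
  rw [mem_part' hk] at hA hB
  intro hsub
  rcases hA with rfl | ⟨j, hj, rfl⟩ <;> rcases hB with rfl | ⟨j', hj', rfl⟩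
  · exact hne (tri_subset_tri hk hsub)
  · exact not_tri_subset_pr hk hsub
  · exact not_pr_subset_tri hk hj.1 hj.2 hsub
  · exact hne (pr_subset_cases hk hj hj' hsub).1

end SPlemmas

theorem SP_two_k_add_one_lower (k : ℕ) (hk : 1 ≤ k) :
    2 * k - 1 ≤ SP (2 * k + 1) k := by
  haveI : NeZero (2*k-1) := ⟨by omega⟩
  classical
  set Sys : Finset (Finset (Finset (Fin (2*k+1)))) :=
    (Finset.univ : Finset (ZMod (2*k-1))).image (part k) with hSys
  have hcard : Sys.card = 2*k-1 := by
    rw [hSys, card_image_of_injective _ (part_inj hk), card_univ, ZMod.card]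
  have hmem : (2*k-1 : ℕ) ∈ {m | ∃ Sys : Finset (Finset (Finset (Fin (2*k+1)))),
      IsSpernerPartitionSystem Finset.univ k Sys ∧ Sys.card = m} := by
    refine ⟨Sys, ⟨?_, ?_⟩, hcard⟩
    · intro P hP
      obtain ⟨i, _, rfl⟩ := mem_image.1 hP
      exact part_isPartition hk i
    · intro P hP Q hQ hne A hA B hB
      obtain ⟨i, _, rfl⟩ := mem_image.1 hP
      obtain ⟨i', _, rfl⟩ := mem_image.1 hQ
      exact part_sperner hk (fun h => hne (by rw [h])) hA hB
  have hbdd : BddAbove {m | ∃ Sys : Finset (Finset (Finset (Fin (2*k+1)))),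
      IsSpernerPartitionSystem Finset.univ k Sys ∧ Sys.card = m} := by
    refine ⟨Fintype.card (Finset (Finset (Fin (2*k+1)))), ?_⟩
    rintro m ⟨S, -, rfl⟩
    exact Finset.card_le_univ S
  exact le_csSup hbdd hmem
end

section
/- There does not exist a Sperner 3-partition system on a 7-element set with six partitions; in fact SP(7, 3) = 5. -/
open Finset

namespace SPproof

/-- the class of `P` containing `x` (junk if not unique). -/
def cls (P : Finset (Finset (Fin 7))) (x : Fin 7) : Finset (Fin 7) :=
  (P.filter (fun A => x ∈ A)).sup id

lemma cls_eq {P : Finset (Finset (Fin 7))} (hP : IsPartitionInto Finset.univ 3 P)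
    {x : Fin 7} {A : Finset (Fin 7)} (hA : A ∈ P) (hx : x ∈ A) : cls P x = A := by
  obtain ⟨B, _, hBu⟩ := hP.2.2.2 x (mem_univ x)
  have hfil : P.filter (fun A => x ∈ A) = {A} := by
    ext C
    simp only [mem_filter, mem_singleton]
    constructor
    · rintro ⟨hC, hxC⟩
      rw [hBu C ⟨hC, hxC⟩, ← hBu A ⟨hA, hx⟩]
    · rintro rfl; exact ⟨hA, hx⟩
  rw [cls, hfil, sup_singleton, id]

lemma cls_self_mem {P : Finset (Finset (Fin 7))} (hP : IsPartitionInto Finset.univ 3 P)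
    (x : Fin 7) : cls P x ∈ P ∧ x ∈ cls P x := by
  obtain ⟨A, ⟨hA, hx⟩, _⟩ := hP.2.2.2 x (mem_univ x)
  rw [cls_eq hP hA hx]; exact ⟨hA, hx⟩

lemma class_disjoint {P : Finset (Finset (Fin 7))} (hP : IsPartitionInto Finset.univ 3 P)
    {A B : Finset (Fin 7)} (hA : A ∈ P) (hB : B ∈ P) (hne : A ≠ B) : Disjoint A B := by
  rw [disjoint_left]
  intro x hxA hxB
  obtain ⟨C, _, hCu⟩ := hP.2.2.2 x (mem_univ x)
  exact hne ((hCu A ⟨hA, hxA⟩).trans (hCu B ⟨hB, hxB⟩).symm)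

lemma pair_eq_singleton_erase {s : Finset (Fin 7)} (h2 : s.card = 2) {x z : Fin 7}
    (hx : x ∈ s) (hz : z ∈ s) (hzx : z ≠ x) : s.erase x = {z} := by
  have h1 : (s.erase x).card = 1 := by rw [card_erase_of_mem hx, h2]
  obtain ⟨a, ha⟩ := card_eq_one.1 h1
  have hzz : z ∈ s.erase x := mem_erase.2 ⟨hzx, hz⟩
  rw [ha] at hzz ⊢
  rw [mem_singleton] at hzz
  rw [hzz]

section Main

variable {Sys : Finset (Finset (Finset (Fin 7)))}
  (hS : IsSpernerPartitionSystem Finset.univ 3 Sys) (hc : Sys.card = 6)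

include hS

/-- two partitions sharing a containment of classes are equal -/
lemma class_inj {P Q : Finset (Finset (Fin 7))} (hP : P ∈ Sys) (hQ : Q ∈ Sys)
    {A B : Finset (Fin 7)} (hA : A ∈ P) (hB : B ∈ Q) (hsub : A ⊆ B) : P = Q := by
  by_contra hne
  exact hS.2 P hP Q hQ hne A hA B hB hsub

include hc in
lemma two_le_card {P : Finset (Finset (Fin 7))} (hP : P ∈ Sys)
    {A : Finset (Fin 7)} (hA : A ∈ P) : 2 ≤ A.card := by
  by_contra h
  obtain ⟨a, ha⟩ := (hS.1 P hP).2.1 A hA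
  have hA1 : A = {a} := by
    have : A.card = 1 := le_antisymm (by omega) (card_pos.2 ⟨a, ha⟩)
    obtain ⟨b, hb⟩ := card_eq_one.1 this
    rw [hb] at ha ⊢
    rw [mem_singleton] at ha
    rw [ha]
  obtain ⟨Q, hQ, hQne⟩ : ∃ Q ∈ Sys, Q ≠ P := by
    have h1 : 1 < Sys.card := by omega
    obtain ⟨Q, hQ, hQne⟩ := exists_mem_ne h1 P
    exact ⟨Q, hQ, hQne⟩
  obtain ⟨hB, haB⟩ := cls_self_mem (hS.1 Q hQ) a
  refine hS.2 P hP Q hQ (Ne.symm hQne) A hA _ hB ?_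
  rw [hA1]
  simpa using haB

include hc in
lemma decomp {P : Finset (Finset (Fin 7))} (hP : P ∈ Sys) :
    ∃ A B C : Finset (Fin 7), P = {A, B, C} ∧ A.card = 3 ∧ B.card = 2 ∧ C.card = 2 ∧
      A ≠ B ∧ A ≠ C ∧ B ≠ C ∧
      Disjoint A B ∧ Disjoint A C ∧ Disjoint B C ∧ A ∪ B ∪ C = Finset.univ := by
  have hP' := hS.1 P hP
  obtain ⟨A, B, C, hAB, hAC, hBC, hPeq⟩ := card_eq_three.1 hP'.1
  have hA : A ∈ P := by rw [hPeq]; simp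
  have hB : B ∈ P := by rw [hPeq]; simp
  have hC : C ∈ P := by rw [hPeq]; simp
  have dAB := class_disjoint hP' hA hB hAB
  have dAC := class_disjoint hP' hA hC hAC
  have dBC := class_disjoint hP' hB hC hBC
  have hcover : A ∪ B ∪ C = Finset.univ := by
    apply eq_univ_of_forall
    intro x
    obtain ⟨hD, hxD⟩ := cls_self_mem hP' x
    set D := cls P x with hDdef
    rw [hPeq] at hD
    simp only [mem_insert, mem_singleton] at hD
    simp only [mem_union]
    rcases hD with rfl | rfl | rfl
    · exact Or.inl (Or.inl hxD)
    · exact Or.inl (Or.inr hxD)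
    · exact Or.inr hxD
  have hsum : A.card + B.card + C.card = 7 := by
    have h1 : (A ∪ B ∪ C).card = 7 := by rw [hcover]; simp
    rw [card_union_of_disjoint (by
      rw [disjoint_union_left]; exact ⟨dAC, dBC⟩),
      card_union_of_disjoint dAB] at h1
    exact h1
  have h2A := two_le_card hS hc hP hA
  have h2B := two_le_card hS hc hP hB
  have h2C := two_le_card hS hc hP hC
  -- one of them has card 3
  rcases show (A.card = 3 ∧ B.card = 2 ∧ C.card = 2) ∨
      (B.card = 3 ∧ A.card = 2 ∧ C.card = 2) ∨
      (C.card = 3 ∧ A.card = 2 ∧ B.card = 2) by omega with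
    ⟨h1, h2, h3⟩ | ⟨h1, h2, h3⟩ | ⟨h1, h2, h3⟩
  · exact ⟨A, B, C, hPeq, h1, h2, h3, hAB, hAC, hBC, dAB, dAC, dBC, hcover⟩
  · refine ⟨B, A, C, ?_, h1, h2, h3, hAB.symm, hBC, hAC, dAB.symm, dBC, dAC, ?_⟩
    · rw [hPeq]; ext D; simp; tauto
    · rw [← hcover]; ext y; simp; tauto
  · refine ⟨C, A, B, ?_, h1, h2, h3, hAC.symm, hBC.symm, hAB, dAC.symm, dBC.symm, dAB, ?_⟩
    · rw [hPeq]; ext D; simp; tauto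
    · rw [← hcover]; ext y; simp; tauto

include hc in
lemma count4 {P : Finset (Finset (Fin 7))} (hP : P ∈ Sys) :
    (Finset.univ.filter (fun z => (cls P z).card = 2)).card = 4 := by
  obtain ⟨A, B, C, hPeq, cA, cB, cC, hAB, hAC, hBC, dAB, dAC, dBC, hcover⟩ := decomp hS hc hP
  have hP' := hS.1 P hP
  have hfil : Finset.univ.filter (fun z => (cls P z).card = 2) = B ∪ C := by
    ext z
    simp only [mem_filter, mem_univ, true_and, mem_union]
    constructor
    · intro h2
      have hz : z ∈ A ∪ B ∪ C := hcover ▸ mem_univ z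
      simp only [mem_union] at hz
      rcases hz with (hz | hz) | hz
      · rw [cls_eq hP' (by rw [hPeq]; simp) hz] at h2; omega
      · exact Or.inl hz
      · exact Or.inr hz
    · rintro (hz | hz)
      · rw [cls_eq hP' (by rw [hPeq]; simp) hz]; exact cB
      · rw [cls_eq hP' (by rw [hPeq]; simp) hz]; exact cC
  rw [hfil, card_union_of_disjoint dBC, cB, cC]

include hc in
lemma exists_x : ∃ x : Fin 7, 4 ≤ (Sys.filter (fun P => (cls P x).card = 2)).card := by
  by_contra h
  push_neg at h
  have hsum : ∑ x : Fin 7, (Sys.filter (fun P => (cls P x).card = 2)).card = 24 := by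
    have : ∀ x : Fin 7, (Sys.filter (fun P => (cls P x).card = 2)).card
        = ∑ P ∈ Sys, (if (cls P x).card = 2 then 1 else 0) := by
      intro x; rw [← card_filter]
    simp_rw [this]
    rw [Finset.sum_comm]
    have : ∀ P ∈ Sys, ∑ x : Fin 7, (if (cls P x).card = 2 then 1 else 0) = 4 := by
      intro P hP
      rw [← card_filter]
      exact count4 hS hc hP
    rw [Finset.sum_congr rfl this]
    rw [Finset.sum_const, hc]
    rfl
  have hle : ∑ x : Fin 7, (Sys.filter (fun P => (cls P x).card = 2)).card ≤ 21 := by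
    calc ∑ x : Fin 7, (Sys.filter (fun P => (cls P x).card = 2)).card
        ≤ ∑ _x : Fin 7, 3 := Finset.sum_le_sum (fun x _ => by have := h x; omega)
      _ = 21 := by simp
  omega

omit hS in
lemma pair_eq {s : Finset (Fin 7)} (h2 : s.card = 2) {a b : Fin 7}
    (ha : a ∈ s) (hb : b ∈ s) (hab : a ≠ b) : s = {a, b} := by
  have hsub : ({a, b} : Finset (Fin 7)) ⊆ s := by
    intro z hz; simp only [mem_insert, mem_singleton] at hz
    rcases hz with rfl | rfl <;> assumption
  exact (eq_of_subset_of_card_le hsub (by rw [h2, card_pair hab])).symm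

include hc in
lemma cls_card {P : Finset (Finset (Fin 7))} (hP : P ∈ Sys) (x : Fin 7) :
    (cls P x).card = 2 ∨ (cls P x).card = 3 := by
  obtain ⟨A, B, C, hPeq, cA, cB, cC, _⟩ := decomp hS hc hP
  obtain ⟨hmem, _⟩ := cls_self_mem (hS.1 P hP) x
  rw [hPeq] at hmem
  simp only [mem_insert, mem_singleton] at hmem
  rcases hmem with h | h | h <;> rw [← hPeq] at h <;> rw [h] <;> omega

include hc in
lemma level1 {x : Fin 7} (ht : 4 ≤ (Sys.filter (fun P => (cls P x).card = 2)).card) :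
    ∀ P ∈ Sys, (cls P x).card = 2 := by
  classical
  set T := Sys.filter (fun P => (cls P x).card = 2) with hTdef
  set S := Sys.filter (fun P => ¬ (cls P x).card = 2) with hSdef
  have hTS : T.card + S.card = 6 := by
    rw [hTdef, hSdef, card_filter_add_card_filter_not, hc]
  -- the partner set
  set Ys := T.biUnion (fun Q => (cls Q x).erase x) with hYdef
  have hT2 : ∀ Q ∈ T, (cls Q x).card = 2 := fun Q hQ => (mem_filter.1 hQ).2
  have hTmem : ∀ Q ∈ T, Q ∈ Sys := fun Q hQ => (mem_filter.1 hQ).1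
  have hEr1 : ∀ Q ∈ T, ((cls Q x).erase x).card = 1 := by
    intro Q hQ
    rw [card_erase_of_mem (cls_self_mem (hS.1 Q (hTmem Q hQ)) x).2, hT2 Q hQ]
  have hclsPair : ∀ Q ∈ T, ∀ z ∈ (cls Q x).erase x, cls Q x = {x, z} := by
    intro Q hQ z hz
    obtain ⟨hzx, hzc⟩ := mem_erase.1 hz
    exact pair_eq (hT2 Q hQ) (cls_self_mem (hS.1 Q (hTmem Q hQ)) x).2 hzc (Ne.symm hzx)
  have hYcard : Ys.card = T.card := by
    rw [hYdef, card_biUnion]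
    · rw [Finset.sum_congr rfl hEr1, Finset.sum_const, smul_eq_mul, mul_one]
    · intro Q hQ Q' hQ' hne
      rw [Function.onFun_apply, disjoint_left]
      intro z hz hz'
      apply hne
      apply class_inj hS (hTmem Q hQ) (hTmem Q' hQ')
        (cls_self_mem (hS.1 Q (hTmem Q hQ)) x).1
        (cls_self_mem (hS.1 Q' (hTmem Q' hQ')) x).1
      rw [hclsPair Q hQ z hz, hclsPair Q' hQ' z hz']
  have hYsub : Ys ⊆ Finset.univ.erase x := by
    intro z hz
    obtain ⟨Q, _, hzQ⟩ := mem_biUnion.1 hz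
    exact mem_erase.2 ⟨(mem_erase.1 hzQ).1, mem_univ z⟩
  set pool := (Finset.univ.erase x) \ Ys with hpooldef
  have hTle : T.card ≤ 6 := by omega
  have hpool : pool.card = 6 - T.card := by
    rw [hpooldef, card_sdiff_of_subset hYsub, hYcard, card_erase_of_mem (mem_univ x), card_univ]
    rfl
  -- the map on S
  have hmap : ∀ P ∈ S, (cls P x).erase x ∈ pool.powersetCard 2 := by
    intro P hP
    obtain ⟨hPS, hPn2⟩ := mem_filter.1 hP
    have hc3 : (cls P x).card = 3 := (cls_card hS hc hPS x).resolve_left hPn2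
    rw [mem_powersetCard]
    constructor
    · intro z hz
      obtain ⟨hzx, hzc⟩ := mem_erase.1 hz
      rw [hpooldef, mem_sdiff]
      refine ⟨mem_erase.2 ⟨hzx, mem_univ z⟩, ?_⟩
      intro hzY
      obtain ⟨Q, hQ, hzQ⟩ := mem_biUnion.1 hzY
      have hQP : Q = P := by
        apply class_inj hS (hTmem Q hQ) hPS
          (cls_self_mem (hS.1 Q (hTmem Q hQ)) x).1
          (cls_self_mem (hS.1 P hPS) x).1
        rw [hclsPair Q hQ z hzQ]
        intro w hw
        simp only [mem_insert, mem_singleton] at hw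
        rcases hw with h | h
        · rw [h]; exact (cls_self_mem (hS.1 P hPS) x).2
        · rw [h]; exact hzc
      rw [hQP] at hQ
      exact hPn2 (hT2 P hQ)
    · rw [card_erase_of_mem (cls_self_mem (hS.1 P hPS) x).2, hc3]
  have hinj : Set.InjOn (fun P => (cls P x).erase x) S := by
    intro P hP Q hQ heq
    have hPS := (mem_filter.1 hP).1
    have hQS := (mem_filter.1 hQ).1
    apply class_inj hS hPS hQS (cls_self_mem (hS.1 P hPS) x).1
      (cls_self_mem (hS.1 Q hQS) x).1
    have : insert x ((cls P x).erase x) = insert x ((cls Q x).erase x) := by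
      rw [show (cls P x).erase x = (cls Q x).erase x from heq]
    rw [insert_erase (cls_self_mem (hS.1 P hPS) x).2,
      insert_erase (cls_self_mem (hS.1 Q hQS) x).2] at this
    exact this.le
  have hcardle : S.card ≤ Nat.choose (6 - T.card) 2 := by
    calc S.card ≤ (pool.powersetCard 2).card := card_le_card_of_injOn _ hmap hinj
      _ = Nat.choose (6 - T.card) 2 := by rw [card_powersetCard, hpool]
  have hT6 : T.card = 6 := by
    rcases show T.card = 4 ∨ T.card = 5 ∨ T.card = 6 by omega with h4 | h5 | h6
    · rw [h4, show Nat.choose (6 - 4) 2 = 1 from rfl] at hcardle; omega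
    · rw [h5, show Nat.choose (6 - 5) 2 = 0 from rfl] at hcardle; omega
    · exact h6
  intro P hP
  by_contra hP2
  have : P ∈ S := mem_filter.2 ⟨hP, hP2⟩
  have : 1 ≤ S.card := card_pos.2 ⟨P, this⟩
  omega

end Main

/-- the 3-class of `P` -/
def Ap (P : Finset (Finset (Fin 7))) : Finset (Fin 7) :=
  (P.filter (fun A => A.card = 3)).sup id

/-- the 2-class of `P` not containing `x` -/
def Bp (x : Fin 7) (P : Finset (Finset (Fin 7))) : Finset (Fin 7) :=
  (P.filter (fun A => x ∉ A ∧ A.card = 2)).sup id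

section Main2

variable {Sys : Finset (Finset (Finset (Fin 7)))}
  (hS : IsSpernerPartitionSystem Finset.univ 3 Sys) (hc : Sys.card = 6)
  {x : Fin 7} (h2 : ∀ P ∈ Sys, (cls P x).card = 2)

include hS hc h2

lemma struct2 {P : Finset (Finset (Fin 7))} (hP : P ∈ Sys) :
    Ap P ∈ P ∧ (Ap P).card = 3 ∧ x ∉ Ap P ∧
    Bp x P ∈ P ∧ (Bp x P).card = 2 ∧ x ∉ Bp x P ∧
    Disjoint (cls P x) (Ap P) ∧ Disjoint (cls P x) (Bp x P) ∧
    Disjoint (Ap P) (Bp x P) ∧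
    (∀ z : Fin 7, z ∈ cls P x ∨ z ∈ Ap P ∨ z ∈ Bp x P) := by
  obtain ⟨A, B, C, hPeq, cA, cB, cC, hAB, hAC, hBC, dAB, dAC, dBC, hcover⟩ := decomp hS hc hP
  have hx2 := h2 P hP
  obtain ⟨hclsmem, hxcls⟩ := cls_self_mem (hS.1 P hP) x
  have hApA : Ap P = A := by
    have hfil : P.filter (fun D => D.card = 3) = {A} := by
      ext D
      simp only [mem_filter, mem_singleton]
      constructor
      · rintro ⟨hD, hD3⟩
        rw [hPeq] at hD
        simp only [mem_insert, mem_singleton] at hD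
        rcases hD with rfl | rfl | rfl
        · rfl
        · omega
        · omega
      · rintro rfl
        exact ⟨by rw [hPeq]; simp, cA⟩
    rw [Ap, hfil, sup_singleton, id]
  have hclsBC : cls P x = B ∨ cls P x = C := by
    have := hclsmem
    rw [hPeq] at this
    simp only [mem_insert, mem_singleton] at this
    rcases this with h | h | h <;> rw [← hPeq] at h
    · rw [h] at hx2; omega
    · exact Or.inl h
    · exact Or.inr h
  have key : ∀ B' C' : Finset (Fin 7), P = {A, B', C'} → B'.card = 2 → C'.card = 2 →
      Disjoint A B' → Disjoint A C' → Disjoint B' C' → cls P x = B' →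
      Bp x P = C' := by
    intro B' C' hPeq' cB' cC' dAB' dAC' dB'C' hclsB'
    have hxB' : x ∈ B' := hclsB' ▸ hxcls
    have hfil : P.filter (fun D => x ∉ D ∧ D.card = 2) = {C'} := by
      ext D
      simp only [mem_filter, mem_singleton]
      constructor
      · rintro ⟨hD, hxD, hD2⟩
        rw [hPeq'] at hD
        simp only [mem_insert, mem_singleton] at hD
        rcases hD with rfl | rfl | rfl
        · omega
        · exact absurd hxB' hxD
        · rfl
      · rintro rfl
        refine ⟨by rw [hPeq']; simp, ?_, cC'⟩
        exact fun hxC' => disjoint_left.1 dB'C' hxB' hxC'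
    rw [Bp, hfil, sup_singleton, id]
  rcases hclsBC with hcls | hcls
  · have hBpC : Bp x P = C := key B C hPeq cB cC dAB dAC dBC hcls
    rw [hApA, hBpC, hcls]
    refine ⟨by rw [hPeq]; simp, cA, ?_, by rw [hPeq]; simp, cC, ?_, dAB.symm, dBC, dAC, ?_⟩
    · exact fun hxA => disjoint_left.1 dAB hxA (hcls ▸ hxcls)
    · exact fun hxC => disjoint_left.1 dBC (hcls ▸ hxcls) hxC
    · intro z
      have hz : z ∈ A ∪ B ∪ C := hcover ▸ mem_univ z
      simp only [mem_union] at hz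
      tauto
  · have hBpB : Bp x P = B := by
      apply key C B _ cC cB dAC dAB dBC.symm hcls
      rw [hPeq]; ext D; simp; tauto
    rw [hApA, hBpB, hcls]
    refine ⟨by rw [hPeq]; simp, cA, ?_, by rw [hPeq]; simp, cB, ?_, dAC.symm, dBC.symm, dAB, ?_⟩
    · exact fun hxA => disjoint_left.1 dAC hxA (hcls ▸ hxcls)
    · exact fun hxB => disjoint_left.1 dBC hxB (hcls ▸ hxcls)
    · intro z
      have hz : z ∈ A ∪ B ∪ C := hcover ▸ mem_univ z
      simp only [mem_union] at hz
      tauto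

lemma sum_k : ∑ z ∈ Finset.univ.erase x, (Sys.filter (fun P => z ∈ Bp x P)).card = 12 := by
  have hrw : ∀ z : Fin 7, (Sys.filter (fun P => z ∈ Bp x P)).card
      = ∑ P ∈ Sys, (if z ∈ Bp x P then 1 else 0) := fun z => by rw [← card_filter]
  simp_rw [hrw]
  rw [Finset.sum_comm]
  have hinner : ∀ P ∈ Sys, ∑ z ∈ Finset.univ.erase x, (if z ∈ Bp x P then 1 else 0) = 2 := by
    intro P hP
    obtain ⟨_, _, _, _, hBc, hxB, _⟩ := struct2 hS hc h2 hP
    rw [← card_filter]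
    have : (Finset.univ.erase x).filter (fun z => z ∈ Bp x P) = Bp x P := by
      ext z
      simp only [mem_filter, mem_erase, mem_univ, and_true, true_and]
      constructor
      · rintro ⟨-, h⟩
        exact h
      · intro h
        exact ⟨fun hzx => hxB (hzx ▸ h), h⟩
    rw [this, hBc]
  rw [Finset.sum_congr rfl hinner, Finset.sum_const, hc]
  rfl

lemma exists_cls_part {z : Fin 7} (hz : z ≠ x) :
    ∃ P₀ ∈ Sys, ∀ P ∈ Sys, (z ∈ cls P x ↔ P = P₀) := by
  classical
  have hinj : Set.InjOn (fun P => (cls P x).erase x) Sys := by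
    intro P hP Q hQ heq
    apply class_inj hS hP hQ (cls_self_mem (hS.1 P hP) x).1 (cls_self_mem (hS.1 Q hQ) x).1
    have : insert x ((cls P x).erase x) = insert x ((cls Q x).erase x) := by
      rw [show (cls P x).erase x = (cls Q x).erase x from heq]
    rw [insert_erase (cls_self_mem (hS.1 P hP) x).2,
      insert_erase (cls_self_mem (hS.1 Q hQ) x).2] at this
    exact this.le
  have hsub : Sys.image (fun P => (cls P x).erase x) ⊆ (Finset.univ.erase x).powersetCard 1 := by
    intro s hs
    obtain ⟨P, hP, rfl⟩ := mem_image.1 hs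
    rw [mem_powersetCard]
    refine ⟨fun w hw => mem_erase.2 ⟨(mem_erase.1 hw).1, mem_univ w⟩, ?_⟩
    rw [card_erase_of_mem (cls_self_mem (hS.1 P hP) x).2, h2 P hP]
  have hcards : ((Finset.univ.erase x).powersetCard 1).card ≤
      (Sys.image (fun P => (cls P x).erase x)).card := by
    rw [card_powersetCard, card_erase_of_mem (mem_univ x), card_univ,
      card_image_of_injOn hinj, hc]
    rfl
  have heq := eq_of_subset_of_card_le hsub hcards
  have hzmem : ({z} : Finset (Fin 7)) ∈ (Finset.univ.erase x).powersetCard 1 := by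
    rw [mem_powersetCard]
    exact ⟨by simp [hz], card_singleton z⟩
  rw [← heq] at hzmem
  obtain ⟨P₀, hP₀, hP₀eq⟩ := mem_image.1 hzmem
  refine ⟨P₀, hP₀, fun P hP => ⟨fun hzP => ?_, fun hPP₀ => ?_⟩⟩
  · apply hinj hP hP₀
    show (cls P x).erase x = (cls P₀ x).erase x
    rw [hP₀eq]
    exact pair_eq_singleton_erase (h2 P hP) (cls_self_mem (hS.1 P hP) x).2 hzP hz
  · rw [hPP₀]
    have : z ∈ (cls P₀ x).erase x := by rw [hP₀eq]; exact mem_singleton_self z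
    exact (mem_erase.1 this).2

lemma card_split {z : Fin 7} (hz : z ≠ x) :
    1 + (Sys.filter (fun P => z ∈ Bp x P)).card + (Sys.filter (fun P => z ∈ Ap P)).card = 6 := by
  classical
  obtain ⟨P₀, hP₀, hP₀u⟩ := exists_cls_part hS hc h2 hz
  have hf1 : Sys.filter (fun P => z ∈ cls P x) = {P₀} := by
    ext P
    simp only [mem_filter, mem_singleton]
    constructor
    · rintro ⟨hP, hzP⟩; exact (hP₀u P hP).1 hzP
    · rintro rfl; exact ⟨hP₀, (hP₀u _ hP₀).2 rfl⟩
  have hU : (Sys.filter (fun P => z ∈ cls P x)) ∪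
      ((Sys.filter (fun P => z ∈ Bp x P)) ∪ (Sys.filter (fun P => z ∈ Ap P))) = Sys := by
    ext P
    simp only [mem_union, mem_filter]
    constructor
    · rintro (h | h | h) <;> exact h.1
    · intro hP
      obtain ⟨_, _, _, _, _, _, _, _, _, hcov⟩ := struct2 hS hc h2 hP
      rcases hcov z with h | h | h
      · exact Or.inl ⟨hP, h⟩
      · exact Or.inr (Or.inr ⟨hP, h⟩)
      · exact Or.inr (Or.inl ⟨hP, h⟩)
  have d2 : Disjoint (Sys.filter (fun P => z ∈ Bp x P)) (Sys.filter (fun P => z ∈ Ap P)) := by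
    rw [disjoint_left]
    intro P hPa hPb
    obtain ⟨hP, hB⟩ := mem_filter.1 hPa
    obtain ⟨_, hA⟩ := mem_filter.1 hPb
    obtain ⟨_, _, _, _, _, _, _, _, dApBp, _⟩ := struct2 hS hc h2 hP
    exact disjoint_left.1 dApBp hA hB
  have d1 : Disjoint (Sys.filter (fun P => z ∈ cls P x))
      ((Sys.filter (fun P => z ∈ Bp x P)) ∪ (Sys.filter (fun P => z ∈ Ap P))) := by
    rw [disjoint_left]
    intro P hPc hPu
    obtain ⟨hP, hcls⟩ := mem_filter.1 hPc
    obtain ⟨_, _, _, _, _, _, dclsAp, dclsBp, _, _⟩ := struct2 hS hc h2 hP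
    rcases mem_union.1 hPu with h | h
    · exact disjoint_left.1 dclsBp hcls (mem_filter.1 h).2
    · exact disjoint_left.1 dclsAp hcls (mem_filter.1 h).2
  have := congrArg Finset.card hU
  rw [card_union_of_disjoint d1, card_union_of_disjoint d2, hc, hf1, card_singleton] at this
  omega

lemma bp_inj {P Q : Finset (Finset (Fin 7))} (hP : P ∈ Sys) (hQ : Q ∈ Sys)
    (h : Bp x P = Bp x Q) : P = Q :=
  class_inj hS hP hQ (struct2 hS hc h2 hP).2.2.2.1 (struct2 hS hc h2 hQ).2.2.2.1 h.le

lemma ap_inj {P Q : Finset (Finset (Fin 7))} (hP : P ∈ Sys) (hQ : Q ∈ Sys)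
    (h : Ap P = Ap Q) : P = Q :=
  class_inj hS hP hQ (struct2 hS hc h2 hP).1 (struct2 hS hc h2 hQ).1 h.le

/-- if the pair `{z,u}` is the B-class of `Q` and `z, u` both lie in the A-class of `P`,
we get a contradiction -/
lemma bp_not_in_ap {P Q : Finset (Finset (Fin 7))} (hP : P ∈ Sys) (hQ : Q ∈ Sys)
    {z u : Fin 7} (hzB : z ∈ Bp x Q) (huB : u ∈ Bp x Q) (hne : z ≠ u)
    (hzA : z ∈ Ap P) (huA : u ∈ Ap P) : False := by
  have hsub : Bp x Q ⊆ Ap P := by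
    have hBQ : Bp x Q = {z, u} :=
      pair_eq (struct2 hS hc h2 hQ).2.2.2.2.1 hzB huB hne
    rw [hBQ]
    intro w hw
    simp only [mem_insert, mem_singleton] at hw
    rcases hw with rfl | rfl <;> assumption
  have hQP : Q = P := class_inj hS hQ hP (struct2 hS hc h2 hQ).2.2.2.1 (struct2 hS hc h2 hP).1 hsub
  rw [hQP] at hzB
  exact disjoint_left.1 (struct2 hS hc h2 hP).2.2.2.2.2.2.2.2.1 hzA hzB

lemma k_le2_or_5 {z : Fin 7} (hz : z ≠ x) :
    (Sys.filter (fun P => z ∈ Bp x P)).card ≤ 2 ∨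
    (Sys.filter (fun P => z ∈ Bp x P)).card = 5 := by
  classical
  set Tz := Sys.filter (fun P => z ∈ Bp x P) with hTzdef
  set Az := Sys.filter (fun P => z ∈ Ap P) with hAzdef
  have hsplit := card_split hS hc h2 hz
  rw [← hTzdef, ← hAzdef] at hsplit
  set Ys := Tz.biUnion (fun Q => (Bp x Q).erase z) with hYdef
  have hTzmem : ∀ Q ∈ Tz, Q ∈ Sys ∧ z ∈ Bp x Q := fun Q hQ => mem_filter.1 hQ
  have hEr1 : ∀ Q ∈ Tz, ((Bp x Q).erase z).card = 1 := by
    intro Q hQ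
    rw [card_erase_of_mem (hTzmem Q hQ).2, (struct2 hS hc h2 (hTzmem Q hQ).1).2.2.2.2.1]
  have hYcard : Ys.card = Tz.card := by
    rw [hYdef, card_biUnion]
    · rw [Finset.sum_congr rfl hEr1, Finset.sum_const, smul_eq_mul, mul_one]
    · intro Q hQ Q' hQ' hne
      rw [Function.onFun_apply, disjoint_left]
      intro u hu hu'
      apply hne
      apply bp_inj hS hc h2 (hTzmem Q hQ).1 (hTzmem Q' hQ').1
      have e1 : Bp x Q = insert z ((Bp x Q).erase z) := (insert_erase (hTzmem Q hQ).2).symm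
      have e2 : Bp x Q' = insert z ((Bp x Q').erase z) := (insert_erase (hTzmem Q' hQ').2).symm
      have s1 : (Bp x Q).erase z = {u} :=
        pair_eq_singleton_erase ((struct2 hS hc h2 (hTzmem Q hQ).1).2.2.2.2.1)
          (hTzmem Q hQ).2 (mem_erase.1 hu).2 (mem_erase.1 hu).1
      have s2 : (Bp x Q').erase z = {u} :=
        pair_eq_singleton_erase ((struct2 hS hc h2 (hTzmem Q' hQ').1).2.2.2.2.1)
          (hTzmem Q' hQ').2 (mem_erase.1 hu').2 (mem_erase.1 hu').1
      rw [e1, e2, s1, s2]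
  have hYsub : Ys ⊆ (Finset.univ.erase x).erase z := by
    intro u hu
    obtain ⟨Q, hQ, huQ⟩ := mem_biUnion.1 hu
    refine mem_erase.2 ⟨(mem_erase.1 huQ).1, mem_erase.2 ⟨?_, mem_univ u⟩⟩
    intro hux
    exact (struct2 hS hc h2 (hTzmem Q hQ).1).2.2.2.2.2.1 (hux ▸ (mem_erase.1 huQ).2)
  set pool := ((Finset.univ.erase x).erase z) \ Ys with hpooldef
  have hTzle : Tz.card ≤ 5 := by omega
  have hpool : pool.card = 5 - Tz.card := by
    rw [hpooldef, card_sdiff_of_subset hYsub, hYcard, card_erase_of_mem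
      (mem_erase.2 ⟨hz, mem_univ z⟩), card_erase_of_mem (mem_univ x), card_univ]
    rfl
  have hmap : ∀ P ∈ Az, (Ap P).erase z ∈ pool.powersetCard 2 := by
    intro P hP
    obtain ⟨hPS, hPz⟩ := mem_filter.1 hP
    rw [mem_powersetCard]
    constructor
    · intro w hw
      obtain ⟨hwz, hwA⟩ := mem_erase.1 hw
      rw [hpooldef, mem_sdiff]
      refine ⟨mem_erase.2 ⟨hwz, mem_erase.2 ⟨?_, mem_univ w⟩⟩, ?_⟩
      · intro hwx
        exact (struct2 hS hc h2 hPS).2.2.1 (hwx ▸ hwA)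
      · intro hwY
        obtain ⟨Q, hQ, hwQ⟩ := mem_biUnion.1 hwY
        exact bp_not_in_ap hS hc h2 hPS (hTzmem Q hQ).1 (hTzmem Q hQ).2
          (mem_erase.1 hwQ).2 (Ne.symm (mem_erase.1 hwQ).1) hPz hwA
    · rw [card_erase_of_mem hPz, (struct2 hS hc h2 hPS).2.1]
  have hinj : Set.InjOn (fun P => (Ap P).erase z) Az := by
    intro P hP Q hQ heq
    have hPz := (mem_filter.1 hP).2
    have hQz := (mem_filter.1 hQ).2
    apply ap_inj hS hc h2 (mem_filter.1 hP).1 (mem_filter.1 hQ).1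
    have : insert z ((Ap P).erase z) = insert z ((Ap Q).erase z) := by
      rw [show (Ap P).erase z = (Ap Q).erase z from heq]
    rwa [insert_erase hPz, insert_erase hQz] at this
  have hcardle : Az.card ≤ Nat.choose (5 - Tz.card) 2 := by
    calc Az.card ≤ (pool.powersetCard 2).card := card_le_card_of_injOn _ hmap hinj
      _ = Nat.choose (5 - Tz.card) 2 := by rw [card_powersetCard, hpool]
  have hAzcard : Az.card = 5 - Tz.card := by omega
  rcases show Tz.card ≤ 2 ∨ Tz.card = 3 ∨ Tz.card = 4 ∨ Tz.card = 5 by omega with h | h | h | h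
  · exact Or.inl h
  · rw [h, show Nat.choose (5 - 3) 2 = 1 from rfl] at hcardle; omega
  · rw [h, show Nat.choose (5 - 4) 2 = 0 from rfl] at hcardle; omega
  · exact Or.inr h

lemma k_ne5 {z : Fin 7} (hz : z ≠ x) :
    (Sys.filter (fun P => z ∈ Bp x P)).card ≠ 5 := by
  classical
  intro h5
  set Tz := Sys.filter (fun P => z ∈ Bp x P) with hTzdef
  obtain ⟨P₀, hP₀, hP₀u⟩ := exists_cls_part hS hc h2 hz
  have hzP₀ : z ∈ cls P₀ x := (hP₀u P₀ hP₀).2 rfl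
  obtain ⟨hA0mem, hA0c, hxA0, hB0mem, hB0c, hxB0, hdCA0, hdCB0, hdAB0, hcov0⟩ :=
    struct2 hS hc h2 hP₀
  have hzB0 : z ∉ Bp x P₀ := fun h => disjoint_left.1 hdCB0 hzP₀ h
  have hTzmem : ∀ P ∈ Tz, P ∈ Sys ∧ z ∈ Bp x P := fun P hP => mem_filter.1 hP
  set f1 := Tz.filter (fun P => (cls P x).erase x ⊆ Bp x P₀) with hf1def
  set f2 := Tz.filter (fun P => (Bp x P).erase z ⊆ Bp x P₀) with hf2def
  have hcover : Tz ⊆ f1 ∪ f2 := by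
    intro P hP
    obtain ⟨hPS, hPz⟩ := hTzmem P hP
    have hne : P₀ ≠ P := by
      rintro rfl
      exact disjoint_left.1 hdCB0 hzP₀ hPz
    have hnsub : ¬ Bp x P₀ ⊆ Ap P :=
      hS.2 P₀ hP₀ P hPS hne (Bp x P₀) hB0mem (Ap P) (struct2 hS hc h2 hPS).1
    obtain ⟨b, hbB0, hbA⟩ := not_subset.1 hnsub
    have hbx : b ≠ x := fun h => hxB0 (h ▸ hbB0)
    have hbz : b ≠ z := fun h => hzB0 (h ▸ hbB0)
    rcases (struct2 hS hc h2 hPS).2.2.2.2.2.2.2.2.2 b with hb | hb | hb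
    · apply mem_union_left
      rw [hf1def, mem_filter]
      refine ⟨hP, ?_⟩
      rw [pair_eq_singleton_erase (h2 P hPS) (cls_self_mem (hS.1 P hPS) x).2 hb hbx]
      exact singleton_subset_iff.2 hbB0
    · exact absurd hb hbA
    · apply mem_union_right
      rw [hf2def, mem_filter]
      refine ⟨hP, ?_⟩
      rw [pair_eq_singleton_erase (struct2 hS hc h2 hPS).2.2.2.2.1 hPz hb hbz]
      exact singleton_subset_iff.2 hbB0
  have hf1card : f1.card ≤ 2 := by
    have hmap : ∀ P ∈ f1, (cls P x).erase x ∈ (Bp x P₀).powersetCard 1 := by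
      intro P hP
      obtain ⟨hPT, hsub⟩ := mem_filter.1 hP
      have hPS := (hTzmem P hPT).1
      rw [mem_powersetCard]
      exact ⟨hsub, by rw [card_erase_of_mem (cls_self_mem (hS.1 P hPS) x).2, h2 P hPS]⟩
    have hinj : Set.InjOn (fun P => (cls P x).erase x) f1 := by
      intro P hP Q hQ heq
      have hPS := (hTzmem P (mem_filter.1 hP).1).1
      have hQS := (hTzmem Q (mem_filter.1 hQ).1).1
      apply class_inj hS hPS hQS (cls_self_mem (hS.1 P hPS) x).1 (cls_self_mem (hS.1 Q hQS) x).1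
      have : insert x ((cls P x).erase x) = insert x ((cls Q x).erase x) := by
        rw [show (cls P x).erase x = (cls Q x).erase x from heq]
      rw [insert_erase (cls_self_mem (hS.1 P hPS) x).2,
        insert_erase (cls_self_mem (hS.1 Q hQS) x).2] at this
      exact this.le
    calc f1.card ≤ ((Bp x P₀).powersetCard 1).card := card_le_card_of_injOn _ hmap hinj
      _ = 2 := by rw [card_powersetCard, hB0c]; rfl
  have hf2card : f2.card ≤ 2 := by
    have hmap : ∀ P ∈ f2, (Bp x P).erase z ∈ (Bp x P₀).powersetCard 1 := by
      intro P hP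
      obtain ⟨hPT, hsub⟩ := mem_filter.1 hP
      have hPS := (hTzmem P hPT).1
      rw [mem_powersetCard]
      exact ⟨hsub, by rw [card_erase_of_mem (hTzmem P hPT).2,
        (struct2 hS hc h2 hPS).2.2.2.2.1]⟩
    have hinj : Set.InjOn (fun P => (Bp x P).erase z) f2 := by
      intro P hP Q hQ heq
      have hPT := (mem_filter.1 hP).1
      have hQT := (mem_filter.1 hQ).1
      apply bp_inj hS hc h2 (hTzmem P hPT).1 (hTzmem Q hQT).1
      have : insert z ((Bp x P).erase z) = insert z ((Bp x Q).erase z) := by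
        rw [show (Bp x P).erase z = (Bp x Q).erase z from heq]
      rwa [insert_erase (hTzmem P hPT).2, insert_erase (hTzmem Q hQT).2] at this
    calc f2.card ≤ ((Bp x P₀).powersetCard 1).card := card_le_card_of_injOn _ hmap hinj
      _ = 2 := by rw [card_powersetCard, hB0c]; rfl
  have : Tz.card ≤ (f1 ∪ f2).card := card_le_card hcover
  have := card_union_le f1 f2
  omega

end Main2

theorem no_six : ¬ ∃ Sys : Finset (Finset (Finset (Fin 7))),
    IsSpernerPartitionSystem Finset.univ 3 Sys ∧ Sys.card = 6 := by
  classical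
  rintro ⟨Sys, hS, hc⟩
  obtain ⟨x, ht⟩ := exists_x hS hc
  have h2 := level1 hS hc ht
  have hcard6 : (Finset.univ.erase x).card = 6 := by
    rw [card_erase_of_mem (mem_univ x), card_univ]; rfl
  -- every z ≠ x lies in exactly two B-classes
  have hk2 : ∀ z ∈ Finset.univ.erase x, (Sys.filter (fun P => z ∈ Bp x P)).card = 2 := by
    have hle : ∀ z ∈ Finset.univ.erase x, (Sys.filter (fun P => z ∈ Bp x P)).card ≤ 2 :=
      fun z hz => (k_le2_or_5 hS hc h2 (mem_erase.1 hz).1).resolve_right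
        (k_ne5 hS hc h2 (mem_erase.1 hz).1)
    by_contra hcon
    push_neg at hcon
    obtain ⟨z₀, hz₀, hz₀ne⟩ := hcon
    have hlt : ∑ z ∈ Finset.univ.erase x, (Sys.filter (fun P => z ∈ Bp x P)).card
        < ∑ _z ∈ Finset.univ.erase x, 2 :=
      Finset.sum_lt_sum hle ⟨z₀, hz₀, lt_of_le_of_ne (hle z₀ hz₀) hz₀ne⟩
    rw [sum_k hS hc h2, Finset.sum_const, hcard6, smul_eq_mul] at hlt
    omega
  -- pick some z
  obtain ⟨z, hz⟩ : (Finset.univ.erase x).Nonempty := card_pos.1 (by omega)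
  have hzx : z ≠ x := (mem_erase.1 hz).1
  have hTz2 : (Sys.filter (fun P => z ∈ Bp x P)).card = 2 := hk2 z hz
  obtain ⟨Q1, Q2, hQne, hTzeq⟩ := card_eq_two.1 hTz2
  have hQ1 : Q1 ∈ Sys ∧ z ∈ Bp x Q1 := (mem_filter (a := Q1)).1 (by rw [hTzeq]; simp)
  have hQ2 : Q2 ∈ Sys ∧ z ∈ Bp x Q2 := (mem_filter (a := Q2)).1 (by rw [hTzeq]; simp)
  have getu : ∀ Q, Q ∈ Sys → z ∈ Bp x Q → ∃ u, u ≠ z ∧ u ≠ x ∧ Bp x Q = {z, u} := by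
    intro Q hQ hzB
    have h1 : ((Bp x Q).erase z).card = 1 := by
      rw [card_erase_of_mem hzB, (struct2 hS hc h2 hQ).2.2.2.2.1]
    obtain ⟨u, hu⟩ := card_eq_one.1 h1
    have huB : u ∈ Bp x Q := (erase_subset z (Bp x Q)) (hu ▸ mem_singleton_self u)
    have huz : u ≠ z := (mem_erase.1 (show u ∈ (Bp x Q).erase z from hu ▸ mem_singleton_self u)).1
    refine ⟨u, huz, fun hxu => (struct2 hS hc h2 hQ).2.2.2.2.2.1 (hxu ▸ huB), ?_⟩
    rw [← insert_erase hzB, hu]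
  obtain ⟨u1, hu1z, hu1x, hBpQ1⟩ := getu Q1 hQ1.1 hQ1.2
  obtain ⟨u2, hu2z, hu2x, hBpQ2⟩ := getu Q2 hQ2.1 hQ2.2
  have hu12 : u1 ≠ u2 := by
    rintro rfl
    exact hQne (bp_inj hS hc h2 hQ1.1 hQ2.1 (by rw [hBpQ1, hBpQ2]))
  have hu1B : u1 ∈ Bp x Q1 := by rw [hBpQ1]; simp
  have hu2B : u2 ∈ Bp x Q2 := by rw [hBpQ2]; simp
  have hku1 : (Sys.filter (fun P => u1 ∈ Bp x P)).card = 2 :=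
    hk2 u1 (mem_erase.2 ⟨hu1x, mem_univ u1⟩)
  have hku2 : (Sys.filter (fun P => u2 ∈ Bp x P)).card = 2 :=
    hk2 u2 (mem_erase.2 ⟨hu2x, mem_univ u2⟩)
  -- the A-classes through z
  set Az := Sys.filter (fun P => z ∈ Ap P) with hAzdef
  have hAz3 : Az.card = 3 := by
    have := card_split hS hc h2 hzx
    rw [hTz2, ← hAzdef] at this
    omega
  set W := ((Finset.univ.erase x).erase z) \ {u1, u2} with hWdef
  have hWcard : W.card = 3 := by
    have hsub : ({u1, u2} : Finset (Fin 7)) ⊆ (Finset.univ.erase x).erase z := by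
      intro w hw
      simp only [mem_insert, mem_singleton] at hw
      rcases hw with rfl | rfl
      · exact mem_erase.2 ⟨hu1z, mem_erase.2 ⟨hu1x, mem_univ _⟩⟩
      · exact mem_erase.2 ⟨hu2z, mem_erase.2 ⟨hu2x, mem_univ _⟩⟩
    rw [hWdef, card_sdiff_of_subset hsub, card_pair hu12,
      card_erase_of_mem (mem_erase.2 ⟨hzx, mem_univ z⟩), hcard6]
  have hmap : ∀ P ∈ Az, (Ap P).erase z ∈ W.powersetCard 2 := by
    intro P hP
    obtain ⟨hPS, hPz⟩ := mem_filter.1 hP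
    rw [mem_powersetCard]
    constructor
    · intro w hw
      obtain ⟨hwz, hwA⟩ := mem_erase.1 hw
      rw [hWdef, mem_sdiff]
      constructor
      · refine mem_erase.2 ⟨hwz, mem_erase.2 ⟨?_, mem_univ w⟩⟩
        intro hwx
        exact (struct2 hS hc h2 hPS).2.2.1 (hwx ▸ hwA)
      · intro hwu
        simp only [mem_insert, mem_singleton] at hwu
        rcases hwu with rfl | rfl
        · exact bp_not_in_ap hS hc h2 hPS hQ1.1 hQ1.2 hu1B (Ne.symm hu1z) hPz hwA
        · exact bp_not_in_ap hS hc h2 hPS hQ2.1 hQ2.2 hu2B (Ne.symm hu2z) hPz hwA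
    · rw [card_erase_of_mem hPz, (struct2 hS hc h2 hPS).2.1]
  have hinj : Set.InjOn (fun P => (Ap P).erase z) Az := by
    intro P hP Q hQ heq
    have hPz := (mem_filter.1 hP).2
    have hQz := (mem_filter.1 hQ).2
    apply ap_inj hS hc h2 (mem_filter.1 hP).1 (mem_filter.1 hQ).1
    have : insert z ((Ap P).erase z) = insert z ((Ap Q).erase z) := by
      rw [show (Ap P).erase z = (Ap Q).erase z from heq]
    rwa [insert_erase hPz, insert_erase hQz] at this
  have himeq : Az.image (fun P => (Ap P).erase z) = W.powersetCard 2 := by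
    apply eq_of_subset_of_card_le
    · intro s hs
      obtain ⟨P, hP, rfl⟩ := mem_image.1 hs
      exact hmap P hP
    · rw [card_powersetCard, hWcard, card_image_of_injOn hinj, hAz3]
      decide
  -- find R with Bp x R avoiding z, u1, u2
  set Bad := Sys.filter (fun R => z ∈ Bp x R ∨ u1 ∈ Bp x R ∨ u2 ∈ Bp x R) with hBaddef
  have hQ1u : Q1 ∈ Sys.filter (fun P => u1 ∈ Bp x P) := mem_filter.2 ⟨hQ1.1, hu1B⟩
  have hQ2u : Q2 ∈ Sys.filter (fun P => u2 ∈ Bp x P) := mem_filter.2 ⟨hQ2.1, hu2B⟩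
  have hBadsub : Bad ⊆ (Sys.filter (fun P => z ∈ Bp x P)) ∪
      (((Sys.filter (fun P => u1 ∈ Bp x P)).erase Q1) ∪
       ((Sys.filter (fun P => u2 ∈ Bp x P)).erase Q2)) := by
    intro R hR
    obtain ⟨hRS, hcase⟩ := mem_filter.1 hR
    by_cases hzR : z ∈ Bp x R
    · exact mem_union_left _ (mem_filter.2 ⟨hRS, hzR⟩)
    rcases hcase with h | h | h
    · exact absurd h hzR
    · refine mem_union_right _ (mem_union_left _ (mem_erase.2 ⟨?_, mem_filter.2 ⟨hRS, h⟩⟩))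
      rintro rfl
      exact hzR hQ1.2
    · refine mem_union_right _ (mem_union_right _ (mem_erase.2 ⟨?_, mem_filter.2 ⟨hRS, h⟩⟩))
      rintro rfl
      exact hzR hQ2.2
  have hBadcard : Bad.card ≤ 4 := by
    have h1 := card_le_card hBadsub
    have h2' := card_union_le (Sys.filter (fun P => z ∈ Bp x P))
      (((Sys.filter (fun P => u1 ∈ Bp x P)).erase Q1) ∪
       ((Sys.filter (fun P => u2 ∈ Bp x P)).erase Q2))
    have h3 := card_union_le ((Sys.filter (fun P => u1 ∈ Bp x P)).erase Q1)
      ((Sys.filter (fun P => u2 ∈ Bp x P)).erase Q2)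
    have h4 : ((Sys.filter (fun P => u1 ∈ Bp x P)).erase Q1).card = 1 := by
      rw [card_erase_of_mem hQ1u, hku1]
    have h5 : ((Sys.filter (fun P => u2 ∈ Bp x P)).erase Q2).card = 1 := by
      rw [card_erase_of_mem hQ2u, hku2]
    omega
  have hBadSys : Bad ⊆ Sys := by rw [hBaddef]; exact filter_subset _ _
  obtain ⟨R, hR⟩ : (Sys \ Bad).Nonempty := by
    apply card_pos.1
    rw [card_sdiff_of_subset hBadSys, hc]
    omega
  obtain ⟨hRS, hRBad⟩ := mem_sdiff.1 hR
  have hRavoid : z ∉ Bp x R ∧ u1 ∉ Bp x R ∧ u2 ∉ Bp x R := by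
    by_contra hcon
    apply hRBad
    rw [hBaddef, mem_filter]
    refine ⟨hRS, ?_⟩
    tauto
  have hBpRW : Bp x R ∈ W.powersetCard 2 := by
    rw [mem_powersetCard]
    refine ⟨?_, (struct2 hS hc h2 hRS).2.2.2.2.1⟩
    intro w hw
    rw [hWdef, mem_sdiff]
    constructor
    · refine mem_erase.2 ⟨?_, mem_erase.2 ⟨?_, mem_univ w⟩⟩
      · rintro rfl; exact hRavoid.1 hw
      · rintro rfl; exact (struct2 hS hc h2 hRS).2.2.2.2.2.1 hw
    · intro hwu
      simp only [mem_insert, mem_singleton] at hwu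
      rcases hwu with rfl | rfl
      · exact hRavoid.2.1 hw
      · exact hRavoid.2.2 hw
  rw [← himeq] at hBpRW
  obtain ⟨P, hPAz, hPeq⟩ := mem_image.1 hBpRW
  have hPS : P ∈ Sys := (mem_filter.1 hPAz).1
  have hsub : Bp x R ⊆ Ap P := by
    rw [← hPeq]
    exact erase_subset z (Ap P)
  have hRP : R = P := class_inj hS hRS hPS (struct2 hS hc h2 hRS).2.2.2.1
    (struct2 hS hc h2 hPS).1 hsub
  obtain ⟨w, hw⟩ : (Bp x R).Nonempty :=
    card_pos.1 (by rw [(struct2 hS hc h2 hRS).2.2.2.2.1]; omega)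
  have hwA : w ∈ Ap P := hsub hw
  rw [hRP] at hw
  exact disjoint_left.1 (struct2 hS hc h2 hPS).2.2.2.2.2.2.2.2.1 hwA hw


def Sys5 : Finset (Finset (Finset (Fin 7))) :=
  { {{0,1,2},{3,4},{5,6}}, {{0,1,3},{2,5},{4,6}}, {{0,1,4},{2,6},{3,5}},
    {{0,1,5},{2,4},{3,6}}, {{0,1,6},{2,3},{4,5}} }

lemma partition_of_three {A B C : Finset (Fin 7)}
    (hA : A.Nonempty) (hB : B.Nonempty) (hC : C.Nonempty)
    (hcard : ({A, B, C} : Finset (Finset (Fin 7))).card = 3)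
    (hcover : A ∪ B ∪ C = univ)
    (hAB : Disjoint A B) (hAC : Disjoint A C) (hBC : Disjoint B C) :
    IsPartitionInto Finset.univ 3 ({A, B, C} : Finset (Finset (Fin 7))) := by
  refine ⟨hcard, ?_, fun D _ => subset_univ D, ?_⟩
  · intro D hD
    simp only [mem_insert, mem_singleton] at hD
    rcases hD with rfl | rfl | rfl <;> assumption
  · intro x _
    have hx : x ∈ A ∪ B ∪ C := hcover ▸ mem_univ x
    simp only [mem_union] at hx
    have key : ∀ D, D ∈ ({A, B, C} : Finset (Finset (Fin 7))) ∧ x ∈ D →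
        ∀ E, E ∈ ({A, B, C} : Finset (Finset (Fin 7))) ∧ x ∈ E → D = E := by
      rintro D ⟨hD, hxD⟩ E ⟨hE, hxE⟩
      simp only [mem_insert, mem_singleton] at hD hE
      rcases hD with rfl | rfl | rfl <;> rcases hE with rfl | rfl | rfl <;>
        first
        | rfl
        | exact absurd hxE (disjoint_left.1 hAB hxD)
        | exact absurd hxE (disjoint_left.1 hAC hxD)
        | exact absurd hxE (disjoint_left.1 hBC hxD)
        | exact absurd hxE (disjoint_left.1 hAB.symm hxD)
        | exact absurd hxE (disjoint_left.1 hAC.symm hxD)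
        | exact absurd hxE (disjoint_left.1 hBC.symm hxD)
    rcases hx with (hx | hx) | hx
    · exact ⟨A, ⟨by simp, hx⟩, fun D hD => key D hD A ⟨by simp, hx⟩⟩
    · exact ⟨B, ⟨by simp, hx⟩, fun D hD => key D hD B ⟨by simp, hx⟩⟩
    · exact ⟨C, ⟨by simp, hx⟩, fun D hD => key D hD C ⟨by simp, hx⟩⟩

theorem Sys5_partitions : ∀ P ∈ Sys5, IsPartitionInto Finset.univ 3 P := by
  intro P hP
  simp only [Sys5, mem_insert, mem_singleton] at hP
  rcases hP with rfl | rfl | rfl | rfl | rfl <;>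
    exact partition_of_three (by decide) (by decide) (by decide) (by decide)
      (by decide) (by decide) (by decide) (by decide)

theorem Sys5_cross : ∀ P ∈ Sys5, ∀ Q ∈ Sys5, P ≠ Q → ∀ A ∈ P, ∀ B ∈ Q, ¬ A ⊆ B := by
  intro P hP Q hQ hne
  simp only [Sys5, mem_insert, mem_singleton] at hP hQ
  rcases hP with rfl | rfl | rfl | rfl | rfl <;>
    rcases hQ with rfl | rfl | rfl | rfl | rfl <;>
      first
      | exact absurd rfl hne
      | · intro A hA B hB
          fin_cases hA <;> fin_cases hB <;> decide

theorem Sys5_card : Sys5.card = 5 := by decide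

end SPproof

theorem SP_seven_three :
    (¬ ∃ Sys : Finset (Finset (Finset (Fin 7))),
      IsSpernerPartitionSystem Finset.univ 3 Sys ∧ Sys.card = 6) ∧
    SP 7 3 = 5 := by
  have no6 := SPproof.no_six
  refine ⟨no6, ?_⟩
  have h5mem : (5 : ℕ) ∈ {m | ∃ Sys : Finset (Finset (Finset (Fin 7))),
      IsSpernerPartitionSystem Finset.univ 3 Sys ∧ Sys.card = m} :=
    ⟨SPproof.Sys5, ⟨SPproof.Sys5_partitions, SPproof.Sys5_cross⟩, SPproof.Sys5_card⟩
  have hub : ∀ m ∈ {m | ∃ Sys : Finset (Finset (Finset (Fin 7))),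
      IsSpernerPartitionSystem Finset.univ 3 Sys ∧ Sys.card = m}, m ≤ 5 := by
    rintro m ⟨Sys, hS, rfl⟩
    by_contra h
    push_neg at h
    obtain ⟨Sys', hsub, hcard'⟩ := Finset.exists_subset_card_eq (s := Sys) (n := 6) (by omega)
    exact no6 ⟨Sys', ⟨fun P hP => hS.1 P (hsub hP),
      fun P hP Q hQ hne => hS.2 P (hsub hP) Q (hsub hQ) hne⟩, hcard'⟩
  show sSup {m | ∃ Sys : Finset (Finset (Finset (Fin 7))),
      IsSpernerPartitionSystem Finset.univ 3 Sys ∧ Sys.card = m} = 5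
  exact le_antisymm (csSup_le ⟨5, h5mem⟩ hub) (le_csSup ⟨5, hub⟩ h5mem)
end

section
/- Let k ≥ 1 be an integer. In any Sperner k-partition system on a (2k+1)-element set that contains at least two partitions, every partition consists of exactly k-1 classes of size 2 and one class of size 3. -/
open Finset

theorem sperner_two_k_add_one_shape (k : ℕ) (hk : 1 ≤ k)
    (Sys : Finset (Finset (Finset (Fin (2 * k + 1)))))
    (hS : IsSpernerPartitionSystem Finset.univ k Sys) (h2 : 2 ≤ Sys.card) :
    ∀ P ∈ Sys, (P.filter (fun A => A.card = 2)).card = k - 1 ∧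
      (P.filter (fun A => A.card = 3)).card = 1 := by
  intro P hP
  obtain ⟨hSys, hSper⟩ := hS
  obtain ⟨hcard, hne, hsub, hu⟩ := hSys P hP
  have hdisj : ∀ A ∈ P, ∀ B ∈ P, A ≠ B → Disjoint (id A) (id B) := by
    intro A hA B hB hAB
    rw [Finset.disjoint_left]
    intro x hxA hxB
    obtain ⟨C, -, hCu⟩ := hu x (mem_univ x)
    exact hAB ((hCu A ⟨hA, hxA⟩).trans (hCu B ⟨hB, hxB⟩).symm)
  have hcover : P.biUnion id = univ := by
    ext x
    simp only [mem_biUnion, id, mem_univ, iff_true]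
    obtain ⟨A, ⟨hA, hxA⟩, -⟩ := hu x (mem_univ x)
    exact ⟨A, hA, hxA⟩
  have hsum : ∑ A ∈ P, A.card = 2 * k + 1 := by
    have hcb := Finset.card_biUnion hdisj
    rw [hcover, card_univ, Fintype.card_fin] at hcb
    simpa using hcb.symm
  have hge2 : ∀ A ∈ P, 2 ≤ A.card := by
    intro A hA
    obtain ⟨x, hx⟩ := hne A hA
    by_contra h
    obtain ⟨Q, hQ, hQP⟩ := Finset.exists_mem_ne (show 1 < Sys.card by omega) P
    obtain ⟨-, -, -, hQu⟩ := hSys Q hQ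
    obtain ⟨B, ⟨hB, hxB⟩, -⟩ := hQu x (mem_univ x)
    refine hSper P hP Q hQ hQP.symm A hA B hB ?_
    intro y hy
    have hA1 : A.card ≤ 1 := by omega
    have hyx : y = x := Finset.card_le_one.mp hA1 y hy x hx
    exact hyx ▸ hxB
  have ht : ∑ A ∈ P, (A.card - 2) = 1 := by
    have heq : ∑ A ∈ P, A.card = ∑ A ∈ P, ((A.card - 2) + 2) :=
      Finset.sum_congr rfl (fun A hA => by have := hge2 A hA; omega)
    rw [Finset.sum_add_distrib, Finset.sum_const, hcard, smul_eq_mul] at heq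
    omega
  have hle : ∀ A ∈ P, A.card - 2 ≤ 1 := by
    intro A hA
    have h' : A.card - 2 ≤ ∑ A ∈ P, (A.card - 2) :=
      Finset.single_le_sum (f := fun A => A.card - 2) (fun i _ => Nat.zero_le _) hA
    omega
  have h3 : (P.filter (fun A => A.card = 3)).card = 1 := by
    have hc : ∑ A ∈ P, (A.card - 2) = (P.filter (fun A => A.card = 3)).card := by
      rw [Finset.card_filter]
      refine Finset.sum_congr rfl (fun A hA => ?_)
      have h2' := hge2 A hA
      have h1' := hle A hA
      by_cases h : A.card = 3 <;> simp [h] <;> omega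
    rw [← hc]
    exact ht
  refine ⟨?_, h3⟩
  have hsplit := Finset.card_filter_add_card_filter_not
    (s := P) (p := fun A => A.card = 2)
  have heq : P.filter (fun A => ¬ A.card = 2) = P.filter (fun A => A.card = 3) := by
    refine Finset.filter_congr (fun A hA => ?_)
    have := hge2 A hA
    have := hle A hA
    constructor <;> intro <;> omega
  rw [heq, h3] at hsplit
  omega
end

section
/- For every integer k > 2, there exists a Sperner k-partition system on a (2k+2)-element set with 2k+1 partitions; consequently SP(2k+2, k) ≥ 2k+1. -/
open Finset

namespace SPAux

instance (k : ℕ) : NeZero (2*k+1) := ⟨Nat.succ_ne_zero _⟩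

variable {k : ℕ}

def em (k : ℕ) (z : ZMod (2*k+1)) : Fin (2*k+2) :=
  ⟨z.val, by have := ZMod.val_lt z; omega⟩

def inf (k : ℕ) : Fin (2*k+2) := ⟨2*k+1, by omega⟩

def C (k : ℕ) (a : ℕ) (t : ZMod (2*k+1)) : Fin (2*k+2) :=
  em k ((a : ZMod (2*k+1)) + t)

lemma C_inj {a b : ℕ} {t s : ZMod (2*k+1)} (h : C k a t = C k b s) :
    (a : ZMod (2*k+1)) + t = b + s := by
  unfold C em at h
  have hv := congrArg Fin.val h
  simp only at hv
  exact ZMod.val_injective _ hv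

lemma C_ne_inf {a : ℕ} {t : ZMod (2*k+1)} : C k a t ≠ inf k := by
  intro h
  have h2 := congrArg Fin.val h
  have := ZMod.val_lt ((a : ZMod (2*k+1)) + t)
  simp [C, em, inf] at h2
  omega

lemma cast_eq_iff {a b : ℕ} (ha : a < 2*k+1) (hb : b < 2*k+1) :
    ((a : ZMod (2*k+1)) = b) ↔ a = b := by
  constructor
  · intro h
    have := congrArg ZMod.val h
    rwa [ZMod.val_cast_of_lt ha, ZMod.val_cast_of_lt hb] at this
  · rintro rfl; rfl

lemma t_eq {t s : ZMod (2*k+1)} {a b : ℕ}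
    (h : (a : ZMod (2*k+1)) + t = b + s) (hab : a = b) : t = s := by
  subst hab; exact add_left_cancel h

lemma combine {t s : ZMod (2*k+1)} {a1 b1 a2 b2 : ℕ}
    (ha1 : a1 < 2*k+1) (hb1 : b1 < 2*k+1) (ha2 : a2 < 2*k+1) (hb2 : b2 < 2*k+1)
    (h1 : (a1 : ZMod (2*k+1)) + t = b1 + s)
    (h2 : (a2 : ZMod (2*k+1)) + t = b2 + s) :
    a1 + b2 = a2 + b1 ∨ a1 + b2 = a2 + b1 + (2*k+1) ∨ a1 + b2 + (2*k+1) = a2 + b1 := by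
  have key : ((a1 + b2 : ℕ) : ZMod (2*k+1)) = ((a2 + b1 : ℕ) : ZMod (2*k+1)) := by
    push_cast
    linear_combination h1 - h2
  have hv := congrArg ZMod.val key
  rw [ZMod.val_natCast, ZMod.val_natCast] at hv
  have m1 : (a1+b2) % (2*k+1) = a1+b2 ∨ ((a1+b2) % (2*k+1) = a1+b2 - (2*k+1) ∧ 2*k+1 ≤ a1+b2) := by
    rcases Nat.lt_or_ge (a1+b2) (2*k+1) with h | h
    · exact Or.inl (Nat.mod_eq_of_lt h)
    · exact Or.inr ⟨by rw [Nat.mod_eq_sub_mod h, Nat.mod_eq_of_lt (by omega)], h⟩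
  have m2 : (a2+b1) % (2*k+1) = a2+b1 ∨ ((a2+b1) % (2*k+1) = a2+b1 - (2*k+1) ∧ 2*k+1 ≤ a2+b1) := by
    rcases Nat.lt_or_ge (a2+b1) (2*k+1) with h | h
    · exact Or.inl (Nat.mod_eq_of_lt h)
    · exact Or.inr ⟨by rw [Nat.mod_eq_sub_mod h, Nat.mod_eq_of_lt (by omega)], h⟩
  rcases m1 with m1 | ⟨m1, m1'⟩ <;> rcases m2 with m2 | ⟨m2, m2'⟩ <;> omega


def T1 (k : ℕ) (t : ZMod (2*k+1)) : Finset (Fin (2*k+2)) :=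
  {inf k, C k 1 t, C k (2*k) t}

def T2 (k : ℕ) (t : ZMod (2*k+1)) : Finset (Fin (2*k+2)) :=
  {C k 0 t, C k 2 t, C k (2*k-1) t}

def Pr (k : ℕ) (i : ℕ) (t : ZMod (2*k+1)) : Finset (Fin (2*k+2)) :=
  {C k i t, C k (2*k+1-i) t}

def Pt (k : ℕ) (t : ZMod (2*k+1)) : Finset (Finset (Fin (2*k+2))) :=
  insert (T1 k t) (insert (T2 k t) ((Icc 3 k).image (fun i => Pr k i t)))

lemma mem_T1 {x : Fin (2*k+2)} {t : ZMod (2*k+1)} :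
    x ∈ T1 k t ↔ x = inf k ∨ x = C k 1 t ∨ x = C k (2*k) t := by
  simp [T1]

lemma mem_T2 {x : Fin (2*k+2)} {t : ZMod (2*k+1)} :
    x ∈ T2 k t ↔ x = C k 0 t ∨ x = C k 2 t ∨ x = C k (2*k-1) t := by
  simp [T2]

lemma mem_Pr {x : Fin (2*k+2)} {i : ℕ} {t : ZMod (2*k+1)} :
    x ∈ Pr k i t ↔ x = C k i t ∨ x = C k (2*k+1-i) t := by
  simp [Pr]

lemma mem_Pr3 {x : Fin (2*k+2)} {i : ℕ} {t : ZMod (2*k+1)} :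
    x ∈ Pr k i t ↔ x = C k i t ∨ x = C k (2*k+1-i) t ∨ x = C k i t := by
  rw [mem_Pr]; tauto

lemma mem_Pt {A : Finset (Fin (2*k+2))} {t : ZMod (2*k+1)} :
    A ∈ Pt k t ↔ A = T1 k t ∨ A = T2 k t ∨ ∃ i, (3 ≤ i ∧ i ≤ k) ∧ A = Pr k i t := by
  simp only [Pt, mem_insert, mem_image, mem_Icc]
  constructor
  · rintro (h | h | ⟨i, hi, h⟩)
    · exact Or.inl h
    · exact Or.inr (Or.inl h)
    · exact Or.inr (Or.inr ⟨i, hi, h.symm⟩)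
  · rintro (h | h | ⟨i, hi, h⟩)
    · exact Or.inl h
    · exact Or.inr (Or.inl h)
    · exact Or.inr (Or.inr ⟨i, hi, h.symm⟩)


set_option maxHeartbeats 1000000 in
lemma sperner (hk : 3 ≤ k) {t s : ZMod (2*k+1)} (hts : t ≠ s)
    {A B : Finset (Fin (2*k+2))} (hA : A ∈ Pt k t) (hB : B ∈ Pt k s) : ¬ A ⊆ B := by
  intro hsub
  rw [mem_Pt] at hA hB
  rcases hA with rfl | rfl | ⟨i, ⟨hi3, hik⟩, rfl⟩
  · -- A = T1
    rcases hB with rfl | rfl | ⟨j, ⟨hj3, hjk⟩, rfl⟩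
    · have e1 := hsub (mem_T1.2 (Or.inr (Or.inl rfl)))
      have e2 := hsub (mem_T1.2 (Or.inr (Or.inr rfl)))
      rw [mem_T1] at e1 e2
      rcases e1 with e1|e1|e1 <;> rcases e2 with e2|e2|e2 <;>
      first
      | exact C_ne_inf e1
      | exact C_ne_inf e1.symm
      | exact C_ne_inf e2
      | exact C_ne_inf e2.symm
      | exact hts (t_eq (C_inj e1) (by omega))
      | exact hts (t_eq (C_inj e2) (by omega))
      | (rcases combine (by omega) (by omega) (by omega) (by omega) (C_inj e1) (C_inj e2) with h|h|h <;> first | omega | exact hts (t_eq (C_inj e1) (by omega)))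
    · have e1 := hsub (mem_T1.2 (Or.inl rfl))
      rw [mem_T2] at e1
      rcases e1 with e1|e1|e1 <;> exact C_ne_inf e1.symm
    · have e1 := hsub (mem_T1.2 (Or.inl rfl))
      rw [mem_Pr] at e1
      rcases e1 with e1|e1 <;> exact C_ne_inf e1.symm
  · -- A = T2
    rcases hB with rfl | rfl | ⟨j, ⟨hj3, hjk⟩, rfl⟩
    · have e1 := hsub (mem_T2.2 (Or.inl rfl))
      have e2 := hsub (mem_T2.2 (Or.inr (Or.inl rfl)))
      have e3 := hsub (mem_T2.2 (Or.inr (Or.inr rfl)))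
      rw [mem_T1] at e1 e2 e3
      rcases e1 with e1|e1|e1 <;> rcases e2 with e2|e2|e2 <;> rcases e3 with e3|e3|e3 <;>
      first
      | exact C_ne_inf e1
      | exact C_ne_inf e1.symm
      | exact C_ne_inf e2
      | exact C_ne_inf e2.symm
      | exact C_ne_inf e3
      | exact C_ne_inf e3.symm
      | exact hts (t_eq (C_inj e1) (by omega))
      | exact hts (t_eq (C_inj e2) (by omega))
      | exact hts (t_eq (C_inj e3) (by omega))
      | (rcases combine (by omega) (by omega) (by omega) (by omega) (C_inj e1) (C_inj e2) with h|h|h <;> first | omega | exact hts (t_eq (C_inj e1) (by omega)))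
      | (rcases combine (by omega) (by omega) (by omega) (by omega) (C_inj e1) (C_inj e3) with h|h|h <;> first | omega | exact hts (t_eq (C_inj e1) (by omega)))
      | (rcases combine (by omega) (by omega) (by omega) (by omega) (C_inj e2) (C_inj e3) with h|h|h <;> first | omega | exact hts (t_eq (C_inj e2) (by omega)))
    · have e1 := hsub (mem_T2.2 (Or.inl rfl))
      have e2 := hsub (mem_T2.2 (Or.inr (Or.inl rfl)))
      have e3 := hsub (mem_T2.2 (Or.inr (Or.inr rfl)))
      rw [mem_T2] at e1 e2 e3
      rcases e1 with e1|e1|e1 <;> rcases e2 with e2|e2|e2 <;> rcases e3 with e3|e3|e3 <;>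
      first
      | exact C_ne_inf e1
      | exact C_ne_inf e1.symm
      | exact C_ne_inf e2
      | exact C_ne_inf e2.symm
      | exact C_ne_inf e3
      | exact C_ne_inf e3.symm
      | exact hts (t_eq (C_inj e1) (by omega))
      | exact hts (t_eq (C_inj e2) (by omega))
      | exact hts (t_eq (C_inj e3) (by omega))
      | (rcases combine (by omega) (by omega) (by omega) (by omega) (C_inj e1) (C_inj e2) with h|h|h <;> first | omega | exact hts (t_eq (C_inj e1) (by omega)))
      | (rcases combine (by omega) (by omega) (by omega) (by omega) (C_inj e1) (C_inj e3) with h|h|h <;> first | omega | exact hts (t_eq (C_inj e1) (by omega)))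
      | (rcases combine (by omega) (by omega) (by omega) (by omega) (C_inj e2) (C_inj e3) with h|h|h <;> first | omega | exact hts (t_eq (C_inj e2) (by omega)))
    · have e1 := hsub (mem_T2.2 (Or.inl rfl))
      have e2 := hsub (mem_T2.2 (Or.inr (Or.inl rfl)))
      have e3 := hsub (mem_T2.2 (Or.inr (Or.inr rfl)))
      rw [mem_Pr] at e1 e2 e3
      rcases e1 with e1|e1 <;> rcases e2 with e2|e2 <;> rcases e3 with e3|e3 <;>
      first
      | exact C_ne_inf e1
      | exact C_ne_inf e1.symm
      | exact C_ne_inf e2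
      | exact C_ne_inf e2.symm
      | exact C_ne_inf e3
      | exact C_ne_inf e3.symm
      | exact hts (t_eq (C_inj e1) (by omega))
      | exact hts (t_eq (C_inj e2) (by omega))
      | exact hts (t_eq (C_inj e3) (by omega))
      | (rcases combine (by omega) (by omega) (by omega) (by omega) (C_inj e1) (C_inj e2) with h|h|h <;> first | omega | exact hts (t_eq (C_inj e1) (by omega)))
      | (rcases combine (by omega) (by omega) (by omega) (by omega) (C_inj e1) (C_inj e3) with h|h|h <;> first | omega | exact hts (t_eq (C_inj e1) (by omega)))
      | (rcases combine (by omega) (by omega) (by omega) (by omega) (C_inj e2) (C_inj e3) with h|h|h <;> first | omega | exact hts (t_eq (C_inj e2) (by omega)))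
  · -- A = Pr i
    rcases hB with rfl | rfl | ⟨j, ⟨hj3, hjk⟩, rfl⟩
    · have e1 := hsub (mem_Pr.2 (Or.inl rfl))
      have e2 := hsub (mem_Pr.2 (Or.inr rfl))
      rw [mem_T1] at e1 e2
      rcases e1 with e1|e1|e1 <;> rcases e2 with e2|e2|e2 <;>
      first
      | exact C_ne_inf e1
      | exact C_ne_inf e1.symm
      | exact C_ne_inf e2
      | exact C_ne_inf e2.symm
      | exact hts (t_eq (C_inj e1) (by omega))
      | exact hts (t_eq (C_inj e2) (by omega))
      | (rcases combine (by omega) (by omega) (by omega) (by omega) (C_inj e1) (C_inj e2) with h|h|h <;> first | omega | exact hts (t_eq (C_inj e1) (by omega)))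
    · have e1 := hsub (mem_Pr.2 (Or.inl rfl))
      have e2 := hsub (mem_Pr.2 (Or.inr rfl))
      rw [mem_T2] at e1 e2
      rcases e1 with e1|e1|e1 <;> rcases e2 with e2|e2|e2 <;>
      first
      | exact C_ne_inf e1
      | exact C_ne_inf e1.symm
      | exact C_ne_inf e2
      | exact C_ne_inf e2.symm
      | exact hts (t_eq (C_inj e1) (by omega))
      | exact hts (t_eq (C_inj e2) (by omega))
      | (rcases combine (by omega) (by omega) (by omega) (by omega) (C_inj e1) (C_inj e2) with h|h|h <;> first | omega | exact hts (t_eq (C_inj e1) (by omega)))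
    · have e1 := hsub (mem_Pr.2 (Or.inl rfl))
      have e2 := hsub (mem_Pr.2 (Or.inr rfl))
      rw [mem_Pr] at e1 e2
      rcases e1 with e1|e1 <;> rcases e2 with e2|e2 <;>
      first
      | exact C_ne_inf e1
      | exact C_ne_inf e1.symm
      | exact C_ne_inf e2
      | exact C_ne_inf e2.symm
      | exact hts (t_eq (C_inj e1) (by omega))
      | exact hts (t_eq (C_inj e2) (by omega))
      | (rcases combine (by omega) (by omega) (by omega) (by omega) (C_inj e1) (C_inj e2) with h|h|h <;> first | omega | exact hts (t_eq (C_inj e1) (by omega)))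


lemma C_eq_t {a b : ℕ} {t : ZMod (2*k+1)} (ha : a < 2*k+1) (hb : b < 2*k+1)
    (h : C k a t = C k b t) : a = b :=
  (cast_eq_iff ha hb).1 (add_right_cancel (C_inj h))

set_option maxHeartbeats 1000000 in
lemma classes_eq (hk : 3 ≤ k) {t : ZMod (2*k+1)} {A B : Finset (Fin (2*k+2))}
    (hA : A ∈ Pt k t) (hB : B ∈ Pt k t) {x : Fin (2*k+2)}
    (hxA : x ∈ A) (hxB : x ∈ B) : A = B := by
  rw [mem_Pt] at hA hB
  rcases hA with rfl | rfl | ⟨i, ⟨hi3, hik⟩, rfl⟩ <;>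
    rcases hB with rfl | rfl | ⟨j, ⟨hj3, hjk⟩, rfl⟩
  case _ => rfl
  case _ =>
    simp only [mem_T1, mem_T2] at hxA hxB
    rcases hxA with hxA | hxA | hxA <;> rcases hxB with hxB | hxB | hxB <;>
      first
        | rfl
        | exact absurd (hxA.symm.trans hxB) C_ne_inf
        | exact absurd (hxB.symm.trans hxA) C_ne_inf
        | exact absurd (C_eq_t (by omega) (by omega) (hxA.symm.trans hxB)) (by omega)
  case _ =>
    simp only [mem_T1, mem_Pr] at hxA hxB
    rcases hxA with hxA | hxA | hxA <;> rcases hxB with hxB | hxB <;>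
      first
        | rfl
        | exact absurd (hxA.symm.trans hxB) C_ne_inf
        | exact absurd (hxB.symm.trans hxA) C_ne_inf
        | exact absurd (C_eq_t (by omega) (by omega) (hxA.symm.trans hxB)) (by omega)
  case _ =>
    simp only [mem_T1, mem_T2] at hxA hxB
    rcases hxA with hxA | hxA | hxA <;> rcases hxB with hxB | hxB | hxB <;>
      first
        | rfl
        | exact absurd (hxA.symm.trans hxB) C_ne_inf
        | exact absurd (hxB.symm.trans hxA) C_ne_inf
        | exact absurd (C_eq_t (by omega) (by omega) (hxA.symm.trans hxB)) (by omega)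
  case _ => rfl
  case _ =>
    simp only [mem_T2, mem_Pr] at hxA hxB
    rcases hxA with hxA | hxA | hxA <;> rcases hxB with hxB | hxB <;>
      first
        | rfl
        | exact absurd (hxA.symm.trans hxB) C_ne_inf
        | exact absurd (hxB.symm.trans hxA) C_ne_inf
        | exact absurd (C_eq_t (by omega) (by omega) (hxA.symm.trans hxB)) (by omega)
  case _ =>
    simp only [mem_T1, mem_Pr] at hxA hxB
    rcases hxA with hxA | hxA <;> rcases hxB with hxB | hxB | hxB <;>
      first
        | rfl
        | exact absurd (hxA.symm.trans hxB) C_ne_inf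
        | exact absurd (hxB.symm.trans hxA) C_ne_inf
        | exact absurd (C_eq_t (by omega) (by omega) (hxA.symm.trans hxB)) (by omega)
  case _ =>
    simp only [mem_T2, mem_Pr] at hxA hxB
    rcases hxA with hxA | hxA <;> rcases hxB with hxB | hxB | hxB <;>
      first
        | rfl
        | exact absurd (hxA.symm.trans hxB) C_ne_inf
        | exact absurd (hxB.symm.trans hxA) C_ne_inf
        | exact absurd (C_eq_t (by omega) (by omega) (hxA.symm.trans hxB)) (by omega)
  case _ =>
    simp only [mem_Pr] at hxA hxB
    have hij : i = j := by
      rcases hxA with hxA | hxA <;> rcases hxB with hxB | hxB <;>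
        have hcc := C_eq_t (by omega) (by omega) (hxA.symm.trans hxB) <;> omega
    subst hij
    rfl

lemma covers (hk : 3 ≤ k) (t : ZMod (2*k+1)) (x : Fin (2*k+2)) :
    ∃ A ∈ Pt k t, x ∈ A := by
  by_cases hx : x = inf k
  · exact ⟨T1 k t, mem_Pt.2 (Or.inl rfl), mem_T1.2 (Or.inl hx)⟩
  · have hxlt := x.isLt
    have hxv : x.val < 2*k+1 := by
      by_contra h
      exact hx (Fin.ext (by simp only [inf]; omega))
    obtain ⟨c, hclt, hxC⟩ : ∃ c, c < 2*k+1 ∧ x = C k c t := by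
      refine ⟨(((x.val : ZMod (2*k+1))) - t).val, ZMod.val_lt _, ?_⟩
      have h1 : ((((x.val : ZMod (2*k+1))) - t).val : ZMod (2*k+1))
          = ((x.val : ZMod (2*k+1))) - t := ZMod.natCast_rightInverse _
      apply Fin.ext
      show x.val = (((((x.val : ZMod (2*k+1))) - t).val : ZMod (2*k+1)) + t).val
      rw [h1, sub_add_cancel, ZMod.val_natCast, Nat.mod_eq_of_lt hxv]
    have hcases : c = 0 ∨ c = 1 ∨ c = 2 ∨ c = 2*k-1 ∨ c = 2*k ∨
        (3 ≤ c ∧ c ≤ k) ∨ (k+1 ≤ c ∧ c ≤ 2*k-2) := by omega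
    rcases hcases with h | h | h | h | h | ⟨h1, h2⟩ | ⟨h1, h2⟩
    · subst h; exact ⟨T2 k t, mem_Pt.2 (Or.inr (Or.inl rfl)),
        by rw [hxC]; exact mem_T2.2 (Or.inl rfl)⟩
    · subst h; exact ⟨T1 k t, mem_Pt.2 (Or.inl rfl),
        by rw [hxC]; exact mem_T1.2 (Or.inr (Or.inl rfl))⟩
    · subst h; exact ⟨T2 k t, mem_Pt.2 (Or.inr (Or.inl rfl)),
        by rw [hxC]; exact mem_T2.2 (Or.inr (Or.inl rfl))⟩
    · subst h; exact ⟨T2 k t, mem_Pt.2 (Or.inr (Or.inl rfl)),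
        by rw [hxC]; exact mem_T2.2 (Or.inr (Or.inr rfl))⟩
    · subst h; exact ⟨T1 k t, mem_Pt.2 (Or.inl rfl),
        by rw [hxC]; exact mem_T1.2 (Or.inr (Or.inr rfl))⟩
    · exact ⟨Pr k c t, mem_Pt.2 (Or.inr (Or.inr ⟨c, ⟨h1, h2⟩, rfl⟩)),
        by rw [hxC]; exact mem_Pr.2 (Or.inl rfl)⟩
    · refine ⟨Pr k (2*k+1-c) t,
        mem_Pt.2 (Or.inr (Or.inr ⟨2*k+1-c, ⟨by omega, by omega⟩, rfl⟩)), ?_⟩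
      rw [hxC]
      refine mem_Pr.2 (Or.inr ?_)
      have hcc : 2*k+1-(2*k+1-c) = c := by omega
      rw [hcc]

lemma Pt_card (hk : 3 ≤ k) (t : ZMod (2*k+1)) : (Pt k t).card = k := by
  have hinj : Set.InjOn (fun i => Pr k i t) ↑(Icc 3 k) := by
    intro i hi j hj h
    simp only [coe_Icc, Set.mem_Icc] at hi hj
    replace h : Pr k i t = Pr k j t := h
    have hm : C k i t ∈ Pr k j t := by
      rw [← h]; exact mem_Pr.2 (Or.inl rfl)
    rw [mem_Pr] at hm
    rcases hm with h' | h' <;> have := C_eq_t (by omega) (by omega) h' <;> omega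
  have h2 : T2 k t ∉ (Icc 3 k).image (fun i => Pr k i t) := by
    rw [mem_image]
    rintro ⟨i, hi, h⟩
    rw [mem_Icc] at hi
    have hm : C k 0 t ∈ Pr k i t := by rw [h]; exact mem_T2.2 (Or.inl rfl)
    rw [mem_Pr] at hm
    rcases hm with h' | h' <;> have := C_eq_t (by omega) (by omega) h' <;> omega
  have h1 : T1 k t ∉ insert (T2 k t) ((Icc 3 k).image fun i => Pr k i t) := by
    rw [mem_insert]
    rintro (h | h)
    · have hm : inf k ∈ T2 k t := by rw [← h]; exact mem_T1.2 (Or.inl rfl)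
      rw [mem_T2] at hm
      rcases hm with h' | h' | h' <;> exact C_ne_inf h'.symm
    · rw [mem_image] at h
      obtain ⟨i, hi, h⟩ := h
      replace h : Pr k i t = T1 k t := h
      have hm : inf k ∈ Pr k i t := by rw [h]; exact mem_T1.2 (Or.inl rfl)
      rw [mem_Pr] at hm
      rcases hm with h' | h' <;> exact C_ne_inf h'.symm
  rw [Pt, card_insert_of_notMem h1, card_insert_of_notMem h2,
    card_image_of_injOn hinj, Nat.card_Icc]
  omega

lemma Pt_inj (hk : 3 ≤ k) : Function.Injective (Pt k) := by
  intro t s h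
  by_contra hts
  exact sperner hk hts (mem_Pt.2 (Or.inl rfl))
    (h ▸ (mem_Pt.2 (Or.inl rfl) : T1 k t ∈ Pt k t)) (subset_refl _)

lemma Pt_nonempty (hk : 3 ≤ k) {t : ZMod (2*k+1)} {A : Finset (Fin (2*k+2))}
    (hA : A ∈ Pt k t) : A.Nonempty := by
  rw [mem_Pt] at hA
  rcases hA with rfl | rfl | ⟨i, hi, rfl⟩
  · exact ⟨inf k, mem_T1.2 (Or.inl rfl)⟩
  · exact ⟨C k 0 t, mem_T2.2 (Or.inl rfl)⟩
  · exact ⟨C k i t, mem_Pr.2 (Or.inl rfl)⟩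

end SPAux

theorem SP_two_k_add_two_lower (k : ℕ) (hk : 2 < k) :
    (∃ Sys : Finset (Finset (Finset (Fin (2 * k + 2)))),
      IsSpernerPartitionSystem Finset.univ k Sys ∧ Sys.card = 2 * k + 1) ∧
    2 * k + 1 ≤ SP (2 * k + 2) k := by
  have hk3 : 3 ≤ k := hk
  have main : ∃ Sys : Finset (Finset (Finset (Fin (2 * k + 2)))),
      IsSpernerPartitionSystem Finset.univ k Sys ∧ Sys.card = 2 * k + 1 := by
    refine ⟨(univ : Finset (ZMod (2*k+1))).image (SPAux.Pt k), ⟨?_, ?_⟩, ?_⟩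
    · intro P hP
      rw [Finset.mem_image] at hP
      obtain ⟨t, -, rfl⟩ := hP
      refine ⟨SPAux.Pt_card hk3 t, fun A hA => SPAux.Pt_nonempty hk3 hA,
        fun A _ => Finset.subset_univ A, ?_⟩
      intro x _
      obtain ⟨A, hA, hxA⟩ := SPAux.covers hk3 t x
      exact ⟨A, ⟨hA, hxA⟩, fun B hB => SPAux.classes_eq hk3 hB.1 hA hB.2 hxA⟩
    · intro P hP Q hQ hne A hA B hB
      rw [Finset.mem_image] at hP hQ
      obtain ⟨t, -, rfl⟩ := hP
      obtain ⟨s, -, rfl⟩ := hQ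
      have hts : t ≠ s := fun h => hne (by rw [h])
      exact SPAux.sperner hk3 hts hA hB
    · rw [Finset.card_image_of_injective _ (SPAux.Pt_inj hk3), card_univ, ZMod.card]
  refine ⟨main, ?_⟩
  have hBdd : BddAbove {m | ∃ Sys : Finset (Finset (Finset (Fin (2 * k + 2)))),
      IsSpernerPartitionSystem Finset.univ k Sys ∧ Sys.card = m} := by
    refine ⟨Fintype.card (Finset (Finset (Fin (2 * k + 2)))), ?_⟩
    rintro m ⟨Sys, -, rfl⟩
    exact (Finset.card_le_univ Sys).trans_eq Finset.card_univ
  obtain ⟨Sys, hSys, hcard⟩ := main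
  exact le_csSup hBdd ⟨Sys, hSys, hcard⟩
end
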